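/- arXiv:1708.06166 — 9 statements merged into one kernel-verified Lean document; each statement's English description precedes it below -/
import Mathlib

section
/- Suppose λ > 0 satisfies λ · (max_i Σ_{j≠i} w_{ij}) < 1. Then for every z ∈ ℂⁿ, the function x ↦ D_{λ,W}(x; z) = (1/2)‖z − x‖₂² + λ·P_W(x) is strictly convex on ℂⁿ (viewed as ℝ²ⁿ). -/
open Finset

private lemma quad_id (a b : ℝ) (hab : a + b = 1) (u v : ℂ) :
    ‖(a:ℂ)*u + (b:ℂ)*v‖^2
      = a*‖u‖^2 + b*‖v‖^2 - a*b*(‖u - v‖)^2 := by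
  have hb : b = 1 - a := by linarith
  subst hb
  simp only [Complex.sq_norm, Complex.normSq_apply, Complex.add_re, Complex.add_im,
    Complex.mul_re, Complex.mul_im, Complex.ofReal_re, Complex.ofReal_im,
    Complex.sub_re, Complex.sub_im]
  ring

private lemma pair_bound (a b p q p' q' d d' : ℝ) (ha : 0 < a) (hb : 0 < b)
    (hab : a + b = 1) (h1 : |p - q| ≤ d) (h2 : |p' - q'| ≤ d') :
    (a*p + b*q) * (a*p' + b*q') ≤ a*(p*p') + b*(q*q') + a*b*(d*d') := by
  have hd : 0 ≤ d := le_trans (abs_nonneg _) h1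
  have habs : |(p - q) * (p' - q')| ≤ d * d' := by
    rw [abs_mul]; exact mul_le_mul h1 h2 (abs_nonneg _) hd
  have key : -(d*d') ≤ (p - q)*(p' - q') := (abs_le.mp habs).1
  have hab2 : 0 ≤ a * b := (mul_pos ha hb).le
  have expand : a*(p*p') + b*(q*q') + a*b*(d*d') - (a*p + b*q)*(a*p' + b*q')
      = a*b*((p - q)*(p' - q') + d*d') := by
    have hb' : b = 1 - a := by linarith
    subst hb'; ring
  have nn : 0 ≤ a*b*((p - q)*(p' - q') + d*d') := mul_nonneg hab2 (by linarith)
  linarith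

/-- If λ·(max_i Σ_{j≠i} w_{ij}) < 1, then for every z ∈ ℂⁿ the function
x ↦ D_{λ,W}(x;z) = (1/2)‖z−x‖₂² + λ·P_W(x) is strictly convex on ℂⁿ (viewed as ℝ²ⁿ). -/
theorem stmt0 (n : ℕ) (hn : 0 < n) (W : Matrix (Fin n) (Fin n) ℝ)
    (hsymm : ∀ i j, W i j = W j i) (hnonneg : ∀ i j, 0 ≤ W i j)
    (hdiag : ∀ i, W i i = 0) (lam : ℝ) (hlam : 0 < lam)
    (hbound : lam * (Finset.univ.sup'
        (Finset.univ_nonempty_iff.mpr (Fin.pos_iff_nonempty.mp hn))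
        (fun i => ∑ j ∈ Finset.univ.erase i, W i j)) < 1)
    (z : Fin n → ℂ) :
    StrictConvexOn ℝ Set.univ (fun x : Fin n → ℂ =>
      (1 / 2) * ∑ i, ‖z i - x i‖ ^ 2
        + lam * ((∑ i, ‖x i‖)
            + (1 / 2) * ∑ i, ∑ j, W i j * (‖x i‖ * ‖x j‖))) := by
  constructor
  · exact convex_univ
  intro x _ y _ hxy a b ha hb hab
  simp only [smul_eq_mul]
  set m : Fin n → ℂ := a • x + b • y with hm
  have hmi : ∀ i, m i = (a:ℂ) * x i + (b:ℂ) * y i := by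
    intro i; simp [hm, Complex.real_smul]
  set p : Fin n → ℝ := fun i => ‖x i‖ with hp
  set q : Fin n → ℝ := fun i => ‖y i‖ with hq
  set D : Fin n → ℝ := fun i => ‖x i - y i‖ with hD
  have hDnonneg : ∀ i, 0 ≤ D i := fun i => norm_nonneg _
  have hpq : ∀ i, |p i - q i| ≤ D i := by
    intro i
    simpa [hp, hq, hD] using abs_norm_sub_norm_le (x i) (y i)
  -- per-coordinate bound on abs (m i)
  have hmabs : ∀ i, ‖m i‖ ≤ a * p i + b * q i := by
    intro i
    rw [hmi i]
    calc ‖(a:ℂ) * x i + (b:ℂ) * y i‖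
        ≤ ‖(a:ℂ) * x i‖ + ‖(b:ℂ) * y i‖ :=
          norm_add_le _ _
      _ = a * p i + b * q i := by
          simp [norm_mul, Complex.norm_real, Real.norm_eq_abs, abs_of_pos ha, abs_of_pos hb, hp, hq]
  -- quadratic identity summed
  have hSmid : ∑ i, ‖z i - m i‖^2
      = a * ∑ i, ‖z i - x i‖^2 + b * ∑ i, ‖z i - y i‖^2
        - a*b * ∑ i, (D i)^2 := by
    have hper : ∀ i ∈ Finset.univ, ‖z i - m i‖^2
        = a * ‖z i - x i‖^2 + b * ‖z i - y i‖^2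
          - a*b*(D i)^2 := by
      intro i _
      have hc : (a:ℂ) + (b:ℂ) = 1 := by exact_mod_cast hab
      have hz : z i - m i = (a:ℂ)*(z i - x i) + (b:ℂ)*(z i - y i) := by
        rw [hmi i]; linear_combination (-(z i)) * hc
      have := quad_id a b hab (z i - x i) (z i - y i)
      rw [hz, this]
      have : (z i - x i) - (z i - y i) = y i - x i := by ring
      rw [this]
      have : ‖y i - x i‖ = D i := by
        simp [hD, norm_sub_rev]
      rw [this]
    rw [Finset.sum_congr rfl hper, Finset.sum_sub_distrib, Finset.sum_add_distrib,
      Finset.mul_sum, Finset.mul_sum, Finset.mul_sum]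
  -- ℓ¹ part
  have hL : ∑ i, ‖m i‖ ≤ a * ∑ i, p i + b * ∑ i, q i := by
    calc ∑ i, ‖m i‖ ≤ ∑ i, (a * p i + b * q i) :=
          Finset.sum_le_sum (fun i _ => hmabs i)
      _ = a * ∑ i, p i + b * ∑ i, q i := by
          rw [Finset.sum_add_distrib, Finset.mul_sum, Finset.mul_sum]
  -- coupling part
  have hWc : ∑ i, ∑ j, W i j * (‖m i‖ * ‖m j‖)
      ≤ a * ∑ i, ∑ j, W i j * (p i * p j) + b * ∑ i, ∑ j, W i j * (q i * q j)
        + a*b * ∑ i, ∑ j, W i j * (D i * D j) := by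
    calc ∑ i, ∑ j, W i j * (‖m i‖ * ‖m j‖)
        ≤ ∑ i, ∑ j, (a * (W i j * (p i * p j)) + b * (W i j * (q i * q j))
            + a*b * (W i j * (D i * D j))) := by
          refine Finset.sum_le_sum (fun i _ => Finset.sum_le_sum (fun j _ => ?_))
          have h1 : ‖m i‖ * ‖m j‖
              ≤ (a * p i + b * q i) * (a * p j + b * q j) :=
            mul_le_mul (hmabs i) (hmabs j) (norm_nonneg _)
              (by positivity)
          have h2 := pair_bound a b (p i) (q i) (p j) (q j) (D i) (D j) ha hb hab
            (hpq i) (hpq j)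
          have h3 : ‖m i‖ * ‖m j‖
              ≤ a * (p i * p j) + b * (q i * q j) + a*b*(D i * D j) :=
            le_trans h1 h2
          nlinarith [hnonneg i j, h3, mul_le_mul_of_nonneg_left h3 (hnonneg i j)]
      _ = a * ∑ i, ∑ j, W i j * (p i * p j) + b * ∑ i, ∑ j, W i j * (q i * q j)
            + a*b * ∑ i, ∑ j, W i j * (D i * D j) := by
          simp only [Finset.sum_add_distrib, Finset.mul_sum]
  -- strict part
  have hDsum : 0 < ∑ i, (D i)^2 := by
    obtain ⟨i, hi⟩ := Function.ne_iff.mp hxy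
    refine Finset.sum_pos' (fun j _ => sq_nonneg _) ⟨i, Finset.mem_univ i, ?_⟩
    have : D i ≠ 0 := by
      simp [hD, sub_eq_zero, hi]
    positivity
  set M : ℝ := Finset.univ.sup'
      (Finset.univ_nonempty_iff.mpr (Fin.pos_iff_nonempty.mp hn))
      (fun i => ∑ j ∈ Finset.univ.erase i, W i j) with hM
  have hrow : ∀ i, ∑ j, W i j ≤ M := by
    intro i
    have h1 : ∑ j ∈ Finset.univ.erase i, W i j = ∑ j, W i j :=
      Finset.sum_erase Finset.univ (hdiag i)
    rw [← h1, hM]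
    exact Finset.le_sup' (fun k => ∑ j ∈ Finset.univ.erase k, W k j) (Finset.mem_univ i)
  have hWd : lam * ∑ i, ∑ j, W i j * (D i * D j) < ∑ i, (D i)^2 := by
    have step1 : ∑ i, ∑ j, W i j * (D i * D j) ≤ ∑ i, (∑ j, W i j) * (D i)^2 := by
      have tineq : ∑ i, ∑ j, W i j * (2*(D i * D j))
          ≤ ∑ i, ∑ j, W i j * ((D i)^2 + (D j)^2) := by
        refine Finset.sum_le_sum (fun i _ => Finset.sum_le_sum (fun j _ => ?_))
        refine mul_le_mul_of_nonneg_left ?_ (hnonneg i j)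
        nlinarith [sq_nonneg (D i - D j)]
      have A : ∑ i, ∑ j, W i j * (2*(D i * D j))
          = 2 * ∑ i, ∑ j, W i j * (D i * D j) := by
        rw [Finset.mul_sum]
        refine Finset.sum_congr rfl (fun i _ => ?_)
        rw [Finset.mul_sum]
        exact Finset.sum_congr rfl (fun j _ => by ring)
      have swap : ∑ i, ∑ j, W i j * (D j)^2 = ∑ i, ∑ j, W i j * (D i)^2 := by
        rw [Finset.sum_comm]
        exact Finset.sum_congr rfl (fun i _ => Finset.sum_congr rfl (fun j _ => by
          rw [hsymm j i]))
      have sym : ∑ i, ∑ j, W i j * ((D i)^2 + (D j)^2)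
          = 2 * ∑ i, ∑ j, W i j * (D i)^2 := by
        calc ∑ i, ∑ j, W i j * ((D i)^2 + (D j)^2)
            = ∑ i, ∑ j, (W i j * (D i)^2 + W i j * (D j)^2) :=
              Finset.sum_congr rfl (fun i _ => Finset.sum_congr rfl (fun j _ => by ring))
          _ = ∑ i, ∑ j, W i j * (D i)^2 + ∑ i, ∑ j, W i j * (D j)^2 := by
              rw [← Finset.sum_add_distrib]
              exact Finset.sum_congr rfl (fun i _ => Finset.sum_add_distrib)
          _ = 2 * ∑ i, ∑ j, W i j * (D i)^2 := by rw [swap]; ring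
      have fold : ∑ i, ∑ j, W i j * (D i)^2 = ∑ i, (∑ j, W i j) * (D i)^2 :=
        Finset.sum_congr rfl (fun i _ => (Finset.sum_mul _ _ _).symm)
      rw [A, sym, fold] at tineq
      linarith
    have step2 : ∑ i, (∑ j, W i j) * (D i)^2 ≤ M * ∑ i, (D i)^2 := by
      rw [Finset.mul_sum]
      exact Finset.sum_le_sum (fun i _ =>
        mul_le_mul_of_nonneg_right (hrow i) (sq_nonneg _))
    have step3 : lam * ∑ i, ∑ j, W i j * (D i * D j) ≤ lam * (M * ∑ i, (D i)^2) := by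
      exact mul_le_mul_of_nonneg_left (le_trans step1 step2) hlam.le
    have step4 : lam * (M * ∑ i, (D i)^2) < 1 * ∑ i, (D i)^2 := by
      rw [← mul_assoc]
      exact mul_lt_mul_of_pos_right hbound hDsum
    linarith
  -- final combination
  have h1 : lam * ∑ i, ‖m i‖
      ≤ lam * (a * ∑ i, p i + b * ∑ i, q i) :=
    mul_le_mul_of_nonneg_left hL hlam.le
  have h2 : (lam/2) * (∑ i, ∑ j, W i j * (‖m i‖ * ‖m j‖))
      ≤ (lam/2) * (a * ∑ i, ∑ j, W i j * (p i * p j)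
          + b * ∑ i, ∑ j, W i j * (q i * q j)
          + a*b * ∑ i, ∑ j, W i j * (D i * D j)) :=
    mul_le_mul_of_nonneg_left hWc (by positivity)
  have h3 : (a*b/2) * (lam * ∑ i, ∑ j, W i j * (D i * D j))
      < (a*b/2) * ∑ i, (D i)^2 :=
    mul_lt_mul_of_pos_left hWd (by positivity)
  rw [hSmid] at *
  nlinarith [h1, h2, h3, hSmid]
end

section
/- Suppose λ > 0 satisfies λ · (max_i Σ_{j≠i} w_{ij}) < 1. Then P_W is (1/λ)-weakly convex, i.e., the function x ↦ (1/(2λ))‖x‖₂² + P_W(x) is convex on ℂⁿ (viewed as ℝ²ⁿ). -/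
open Finset

lemma myConvexOn_sum {ι E : Type*} [AddCommMonoid E] [Module ℝ E]
    (t : Finset ι) (f : ι → E → ℝ) (h : ∀ i ∈ t, ConvexOn ℝ Set.univ (f i)) :
    ConvexOn ℝ Set.univ (fun x => ∑ i ∈ t, f i x) := by
  classical
  induction t using Finset.induction with
  | empty => simpa using convexOn_const (0 : ℝ) convex_univ
  | @insert a s hi ih =>
      have h1 : ConvexOn ℝ Set.univ (f a) := h a (Finset.mem_insert_self a s)
      have h2 := ih (fun i hi => h i (Finset.mem_insert_of_mem hi))
      have := h1.add h2
      simpa [Finset.sum_insert hi, Pi.add_def] using this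

lemma mySqConvex {E : Type*} [AddCommMonoid E] [Module ℝ E] {f : E → ℝ}
    (hf : ConvexOn ℝ Set.univ f) (h0 : ∀ x, 0 ≤ f x) :
    ConvexOn ℝ Set.univ (fun x => f x ^ 2) := by
  refine ⟨convex_univ, fun x _ y _ a b ha hb hab => ?_⟩
  have h := hf.2 (Set.mem_univ x) (Set.mem_univ y) ha hb hab
  simp only [smul_eq_mul] at h ⊢
  have h1 : f (a • x + b • y) ^ 2 ≤ (a * f x + b * f y) ^ 2 :=
    pow_le_pow_left₀ (h0 _) h 2
  nlinarith [mul_nonneg (mul_nonneg ha hb) (sq_nonneg (f x - f y))]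

lemma myAbsConvex {n : ℕ} (i : Fin n) :
    ConvexOn ℝ Set.univ (fun x : Fin n → ℂ => ‖x i‖) := by
  refine ⟨convex_univ, fun x _ y _ a b ha hb hab => ?_⟩
  simp only [Pi.add_apply, Pi.smul_apply]
  calc ‖a • x i + b • y i‖
      ≤ ‖a • x i‖ + ‖b • y i‖ := norm_add_le _ _
    _ = a * ‖x i‖ + b * ‖y i‖ := by
        simp [Complex.real_smul, map_mul, Complex.norm_real, abs_of_nonneg ha,
          abs_of_nonneg hb]

/-- If λ·(max_i Σ_{j≠i} w_{ij}) < 1, then P_W is (1/λ)-weakly convex, i.e.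
x ↦ (1/(2λ))‖x‖₂² + P_W(x) is convex on ℂⁿ (viewed as ℝ²ⁿ). -/
theorem stmt1 (n : ℕ) (hn : 0 < n) (W : Matrix (Fin n) (Fin n) ℝ)
    (hsymm : ∀ i j, W i j = W j i) (hnonneg : ∀ i j, 0 ≤ W i j)
    (hdiag : ∀ i, W i i = 0) (lam : ℝ) (hlam : 0 < lam)
    (hbound : lam * (Finset.univ.sup'
        (Finset.univ_nonempty_iff.mpr (Fin.pos_iff_nonempty.mp hn))
        (fun i => ∑ j ∈ Finset.univ.erase i, W i j)) < 1) :
    ConvexOn ℝ Set.univ (fun x : Fin n → ℂ =>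
      (1 / (2 * lam)) * ∑ i, ‖x i‖ ^ 2
        + ((∑ i, ‖x i‖)
            + (1 / 2) * ∑ i, ∑ j, W i j * (‖x i‖ * ‖x j‖))) := by
  classical
  have ne : (Finset.univ : Finset (Fin n)).Nonempty :=
    Finset.univ_nonempty_iff.mpr (Fin.pos_iff_nonempty.mp hn)
  set S : Fin n → ℝ := fun i => ∑ j, W i j with hS
  have hSle : ∀ i, S i ≤ 1 / lam := by
    intro i
    have he : ∑ j ∈ Finset.univ.erase i, W i j = S i := by
      show ∑ j ∈ Finset.univ.erase i, W i j = ∑ j, W i j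
      rw [← Finset.add_sum_erase _ _ (Finset.mem_univ i), hdiag, zero_add]
    have hle : ∑ j ∈ Finset.univ.erase i, W i j
        ≤ Finset.univ.sup' (Finset.univ_nonempty_iff.mpr (Fin.pos_iff_nonempty.mp hn))
            (fun i => ∑ j ∈ Finset.univ.erase i, W i j) :=
      Finset.le_sup' (fun i => ∑ j ∈ Finset.univ.erase i, W i j) (Finset.mem_univ i)
    have hls : lam * S i < 1 := by
      rw [← he]
      calc lam * ∑ j ∈ Finset.univ.erase i, W i j
          ≤ lam * _ := by exact mul_le_mul_of_nonneg_left hle hlam.le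
        _ < 1 := hbound
    rw [le_div_iff₀ hlam]
    nlinarith
  have key : (fun x : Fin n → ℂ =>
      (1 / (2 * lam)) * ∑ i, ‖x i‖ ^ 2
        + ((∑ i, ‖x i‖)
            + (1 / 2) * ∑ i, ∑ j, W i j * (‖x i‖ * ‖x j‖)))
      = (fun x : Fin n → ℂ =>
        (∑ i, ‖x i‖)
        + ((∑ i, ∑ j, (W i j / 4) * (‖x i‖ + ‖x j‖) ^ 2)
        + (∑ i, (1 / (2 * lam) - S i / 2) * ‖x i‖ ^ 2))) := by
    funext x
    set a : Fin n → ℝ := fun i => ‖x i‖ with ha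
    have expand : ∀ i j : Fin n, (W i j / 4) * (a i + a j) ^ 2
        = (1/2) * (W i j * (a i * a j)) + (W i j * a i ^ 2) / 4 + (W i j * a j ^ 2) / 4 := by
      intro i j; ring
    have h1 : ∑ i, ∑ j, (W i j / 4) * (a i + a j) ^ 2
        = (1/2) * (∑ i, ∑ j, W i j * (a i * a j))
          + (∑ i, ∑ j, W i j * a i ^ 2) / 4 + (∑ i, ∑ j, W i j * a j ^ 2) / 4 := by
      simp only [expand, Finset.sum_add_distrib, Finset.mul_sum, Finset.sum_div]
    have h2 : ∑ i, ∑ j, W i j * a j ^ 2 = ∑ i, ∑ j, W i j * a i ^ 2 := by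
      rw [Finset.sum_comm]
      exact Finset.sum_congr rfl fun i _ => Finset.sum_congr rfl fun j _ => by
        rw [hsymm]
    have h3 : ∑ i, ∑ j, W i j * a i ^ 2 = ∑ i, S i * a i ^ 2 := by
      refine Finset.sum_congr rfl fun i _ => ?_
      show _ = (∑ j, W i j) * a i ^ 2
      rw [Finset.sum_mul]
    have h4 : ∑ i, (1 / (2 * lam) - S i / 2) * a i ^ 2
        = (1 / (2 * lam)) * ∑ i, a i ^ 2 - ∑ i, (S i / 2) * a i ^ 2 := by
      rw [Finset.mul_sum, ← Finset.sum_sub_distrib]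
      exact Finset.sum_congr rfl fun i _ => by ring
    have h5 : ∑ i, (S i / 2) * a i ^ 2 = (∑ i, S i * a i ^ 2) / 2 := by
      rw [Finset.sum_div]
      exact Finset.sum_congr rfl fun i _ => by ring
    rw [h1, h2, h3, h4, h5]; ring
  rw [key]
  have c1 : ConvexOn ℝ Set.univ (fun x : Fin n → ℂ => ∑ i, ‖x i‖) :=
    myConvexOn_sum _ _ (fun i _ => myAbsConvex i)
  have c2 : ConvexOn ℝ Set.univ (fun x : Fin n → ℂ =>
      ∑ i, ∑ j, (W i j / 4) * (‖x i‖ + ‖x j‖) ^ 2) := by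
    refine myConvexOn_sum _ _ (fun i _ => myConvexOn_sum _ _ (fun j _ => ?_))
    have hsum : ConvexOn ℝ Set.univ
        (fun x : Fin n → ℂ => ‖x i‖ + ‖x j‖) := by
      have := (myAbsConvex (n := n) i).add (myAbsConvex (n := n) j)
      simpa [Pi.add_def] using this
    have hsq := mySqConvex hsum (fun x => by positivity)
    have := hsq.smul (c := W i j / 4) (div_nonneg (hnonneg i j) (by norm_num))
    simpa [smul_eq_mul] using this
  have c3 : ConvexOn ℝ Set.univ (fun x : Fin n → ℂ =>
      ∑ i, (1 / (2 * lam) - S i / 2) * ‖x i‖ ^ 2) := by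
    refine myConvexOn_sum _ _ (fun i _ => ?_)
    have hc : 0 ≤ 1 / (2 * lam) - S i / 2 := by
      have h := hSle i
      have h1 : S i / 2 ≤ (1 / lam) / 2 := by linarith
      have h2 : (1 / lam) / 2 = 1 / (2 * lam) := by
        rw [div_div, mul_comm]
      linarith
    have hsq := mySqConvex (myAbsConvex (n := n) i) (fun x => by positivity)
    have := hsq.smul (c := 1 / (2 * lam) - S i / 2) hc
    simpa [smul_eq_mul] using this
  have := c1.add (c2.add c3)
  simpa [Pi.add_def] using this
end

section
/- Suppose λ > 0 satisfies λ · Σ_{j≠i} w_{ij} < 1 for every index i. Then the function x ↦ |x|ᵀ(I + λW)|x| is strictly convex on ℂⁿ (viewed as ℝ²ⁿ). -/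
open Finset

private lemma sum_convexOn {ι E : Type*} [AddCommGroup E] [Module ℝ E]
    (t : Finset ι) (f : ι → E → ℝ)
    (h : ∀ i ∈ t, ConvexOn ℝ Set.univ (f i)) :
    ConvexOn ℝ Set.univ (fun x => ∑ i ∈ t, f i x) := by
  classical
  induction t using Finset.induction_on with
  | empty => simpa using convexOn_const 0 convex_univ
  | insert _ _ hi ih =>
    simp only [Finset.sum_insert hi]
    exact (h _ (Finset.mem_insert_self _ _)).add
      (ih fun i hit => h i (Finset.mem_insert_of_mem hit))

private lemma combo_le {a b : ℝ} (ha : 0 < a) (hb : 0 < b) (hab : a + b = 1)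
    (z w : ℂ) : ‖a • z + b • w‖ ^ 2 ≤
      a * ‖z‖ ^ 2 + b * ‖w‖ ^ 2 := by
  rw [Complex.sq_norm, Complex.sq_norm, Complex.sq_norm]
  simp only [Complex.normSq_apply, Complex.add_re, Complex.add_im,
    Complex.smul_re, Complex.smul_im, smul_eq_mul]
  have hb' : b = 1 - a := by linarith
  subst hb'
  nlinarith [mul_nonneg (mul_pos ha hb).le (sq_nonneg (z.re - w.re)),
    mul_nonneg (mul_pos ha hb).le (sq_nonneg (z.im - w.im))]

private lemma combo_lt {a b : ℝ} (ha : 0 < a) (hb : 0 < b) (hab : a + b = 1)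
    {z w : ℂ} (hzw : z ≠ w) : ‖a • z + b • w‖ ^ 2 <
      a * ‖z‖ ^ 2 + b * ‖w‖ ^ 2 := by
  have hpos : 0 < (z.re - w.re) ^ 2 + (z.im - w.im) ^ 2 := by
    have := Complex.normSq_pos.mpr (sub_ne_zero.mpr hzw)
    simp only [Complex.normSq_apply, Complex.sub_re, Complex.sub_im] at this
    nlinarith
  rw [Complex.sq_norm, Complex.sq_norm, Complex.sq_norm]
  simp only [Complex.normSq_apply, Complex.add_re, Complex.add_im,
    Complex.smul_re, Complex.smul_im, smul_eq_mul]
  have hb' : b = 1 - a := by linarith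
  subst hb'
  nlinarith [mul_pos (mul_pos ha hb) hpos]

private lemma key_identity (n : ℕ) (W : Matrix (Fin n) (Fin n) ℝ)
    (hsymm : ∀ i j, W i j = W j i) (lam : ℝ) (A : Fin n → ℝ) :
    ∑ i, ∑ j, ((1 : Matrix (Fin n) (Fin n) ℝ) + lam • W) i j * (A i * A j)
      = (∑ i, (1 - lam * ∑ j, W i j) * A i ^ 2)
        + ∑ i, ∑ j, (lam / 2 * W i j) * (A i + A j) ^ 2 := by
  have hzero : ∑ i, ∑ j, (lam / 2 * W i j * (A j ^ 2 - A i ^ 2)) = 0 := by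
    have hneg : ∑ i, ∑ j, (lam / 2 * W i j * (A j ^ 2 - A i ^ 2))
        = -∑ i, ∑ j, (lam / 2 * W i j * (A j ^ 2 - A i ^ 2)) := by
      nth_rewrite 1 [Finset.sum_comm]
      rw [← Finset.sum_neg_distrib]
      refine Finset.sum_congr rfl fun i _ => ?_
      rw [← Finset.sum_neg_distrib]
      refine Finset.sum_congr rfl fun j _ => ?_
      rw [hsymm j i]; ring
    linarith
  have hLHS : ∀ i, ∑ j, ((1 : Matrix (Fin n) (Fin n) ℝ) + lam • W) i j * (A i * A j)
      = A i * A i + ∑ j, lam * W i j * (A i * A j) := by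
    intro i
    simp only [Matrix.add_apply, Matrix.one_apply, Matrix.smul_apply, smul_eq_mul,
      add_mul, ite_mul, one_mul, zero_mul, Finset.sum_add_distrib,
      Finset.sum_ite_eq, Finset.mem_univ, if_true]
  have per_i : ∀ i, (1 - lam * ∑ j, W i j) * A i ^ 2
        + ∑ j, (lam / 2 * W i j) * (A i + A j) ^ 2
      = A i * A i + ((∑ j, lam * W i j * (A i * A j))
        + ∑ j, lam / 2 * W i j * (A j ^ 2 - A i ^ 2)) := by
    intro i
    have hterm : ∀ j, (lam / 2 * W i j) * (A i + A j) ^ 2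
        = lam * W i j * A i ^ 2 + (lam * W i j * (A i * A j)
          + lam / 2 * W i j * (A j ^ 2 - A i ^ 2)) := fun j => by ring
    rw [Finset.sum_congr rfl fun j _ => hterm j, Finset.sum_add_distrib,
      Finset.sum_add_distrib]
    have h2 : ∑ j, lam * W i j * A i ^ 2 = lam * (∑ j, W i j) * A i ^ 2 := by
      rw [Finset.mul_sum, Finset.sum_mul]
    rw [h2]; ring
  calc ∑ i, ∑ j, ((1 : Matrix (Fin n) (Fin n) ℝ) + lam • W) i j * (A i * A j)
      = ∑ i, (A i * A i + ∑ j, lam * W i j * (A i * A j)) :=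
        Finset.sum_congr rfl fun i _ => hLHS i
    _ = (∑ i, (1 - lam * ∑ j, W i j) * A i ^ 2)
        + ∑ i, ∑ j, (lam / 2 * W i j) * (A i + A j) ^ 2 := by
        have h3 : ∑ i, ((1 - lam * ∑ j, W i j) * A i ^ 2
              + ∑ j, (lam / 2 * W i j) * (A i + A j) ^ 2)
            = ∑ i, (A i * A i + ∑ j, lam * W i j * (A i * A j)) := by
          rw [Finset.sum_congr rfl fun i (_ : i ∈ Finset.univ) => per_i i,
            Finset.sum_add_distrib, Finset.sum_add_distrib, hzero, add_zero,
            ← Finset.sum_add_distrib]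
        rw [← Finset.sum_add_distrib, ← h3]

private lemma convexOn_sq_comp {E : Type*} [AddCommGroup E] [Module ℝ E] {u : E → ℝ}
    (hu : ConvexOn ℝ Set.univ u) (h0 : ∀ x, 0 ≤ u x) :
    ConvexOn ℝ Set.univ (fun x => u x ^ 2) := by
  refine ⟨convex_univ, fun x _ y _ a b ha hb hab => ?_⟩
  have h1 := hu.2 (Set.mem_univ x) (Set.mem_univ y) ha hb hab
  simp only [smul_eq_mul] at h1 ⊢
  have h2 : u (a • x + b • y) ^ 2 ≤ (a * u x + b * u y) ^ 2 := by
    apply pow_le_pow_left₀ (h0 _) h1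
  nlinarith [sq_nonneg (u x - u y), mul_nonneg ha hb, h0 x, h0 y]

/-- If λ·Σ_{j≠i} w_{ij} < 1 for every i, then x ↦ |x|ᵀ(I + λW)|x| is
strictly convex on ℂⁿ (viewed as ℝ²ⁿ). -/
theorem stmt2 (n : ℕ) (hn : 0 < n) (W : Matrix (Fin n) (Fin n) ℝ)
    (hsymm : ∀ i j, W i j = W j i) (hnonneg : ∀ i j, 0 ≤ W i j)
    (hdiag : ∀ i, W i i = 0) (lam : ℝ) (hlam : 0 < lam)
    (hbound : ∀ i, lam * ∑ j ∈ Finset.univ.erase i, W i j < 1) :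
    StrictConvexOn ℝ Set.univ (fun x : Fin n → ℂ =>
      ∑ i, ∑ j, ((1 : Matrix (Fin n) (Fin n) ℝ) + lam • W) i j
        * (‖x i‖ * ‖x j‖)) := by
  classical
  set c : Fin n → ℝ := fun i => 1 - lam * ∑ j, W i j with hc
  have hcpos : ∀ i, 0 < c i := by
    intro i
    have he : ∑ j ∈ Finset.univ.erase i, W i j = ∑ j, W i j :=
      Finset.sum_erase _ (hdiag i)
    have := hbound i
    rw [he] at this
    simp only [hc]
    linarith
  -- strict convexity of the diagonal part
  have hg : StrictConvexOn ℝ Set.univ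
      (fun x : Fin n → ℂ => ∑ i, c i * ‖x i‖ ^ 2) := by
    refine ⟨convex_univ, fun x _ y _ hxy p q hp hq hpq => ?_⟩
    simp only [Pi.add_apply, Pi.smul_apply, smul_eq_mul, Finset.mul_sum,
      ← Finset.sum_add_distrib]
    apply Finset.sum_lt_sum
    · intro i _
      have := combo_le hp hq hpq (x i) (y i)
      nlinarith [(hcpos i).le]
    · obtain ⟨i, hi⟩ := Function.ne_iff.mp hxy
      refine ⟨i, Finset.mem_univ i, ?_⟩
      have := combo_lt hp hq hpq hi
      nlinarith [hcpos i]
  -- convexity of the off-diagonal part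
  have habs : ∀ i : Fin n, ConvexOn ℝ Set.univ
      (fun x : Fin n → ℂ => ‖x i‖) := by
    intro i
    have h1 : ConvexOn ℝ Set.univ (fun z : ℂ => ‖z‖) := by
      exact convexOn_univ_norm
    have := h1.comp_linearMap (LinearMap.proj i : (Fin n → ℂ) →ₗ[ℝ] ℂ)
    exact this
  have hh : ConvexOn ℝ Set.univ (fun x : Fin n → ℂ =>
      ∑ i, ∑ j, (lam / 2 * W i j) * (‖x i‖ + ‖x j‖) ^ 2) := by
    apply sum_convexOn
    intro i _
    apply sum_convexOn
    intro j _
    have hpow := convexOn_sq_comp ((habs i).add (habs j))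
      (fun x => by
        simp only [Pi.add_apply]
        positivity)
    have hsmul := hpow.smul (c := lam / 2 * W i j)
      (mul_nonneg (by positivity) (hnonneg i j))
    simpa [smul_eq_mul] using hsmul
  have heq : (fun x : Fin n → ℂ =>
      ∑ i, ∑ j, ((1 : Matrix (Fin n) (Fin n) ℝ) + lam • W) i j
        * (‖x i‖ * ‖x j‖))
      = fun x : Fin n → ℂ => (∑ i, c i * ‖x i‖ ^ 2)
        + ∑ i, ∑ j, (lam / 2 * W i j) * (‖x i‖ + ‖x j‖) ^ 2 := by
    funext x
    exact key_identity n W hsymm lam (fun i => ‖x i‖)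
  rw [heq]
  exact hg.add_convexOn hh
end

section
/- Let β ≥ 0. For all x, z ∈ ℂⁿ, D_{β,W}(|x|; |z|) ≤ D_{β,W}(x; z), where |x| and |z| are regarded as vectors in ℂⁿ with nonnegative real components. Moreover, with the phase vector u ∈ ℂⁿ defined componentwise by uᵢ = zᵢ/|zᵢ| if zᵢ ≠ 0 and uᵢ = 1 otherwise, D_{β,W}(|x| ⊙ u; z) = D_{β,W}(|x|; |z|), where ⊙ denotes componentwise product. -/
open Finset

lemma abs_abs_coe (w : ℂ) : ‖((‖w‖ : ℝ) : ℂ)‖ = ‖w‖ := by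
  rw [Complex.norm_real, Real.norm_eq_abs, abs_of_nonneg (norm_nonneg w)]

lemma abs_coe_sub (a b : ℝ) : ‖(a : ℂ) - (b : ℂ)‖ = |a - b| := by
  rw [← Complex.ofReal_sub, Complex.norm_real, Real.norm_eq_abs]

/-- For β ≥ 0 and all x, z ∈ ℂⁿ, D_{β,W}(|x|;|z|) ≤ D_{β,W}(x;z), and with the
phase vector u of z (uᵢ = zᵢ/|zᵢ| if zᵢ ≠ 0, else 1), D_{β,W}(|x| ⊙ u; z) = D_{β,W}(|x|;|z|). -/
theorem stmt7 (n : ℕ) (hn : 0 < n) (W : Matrix (Fin n) (Fin n) ℝ)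
    (hsymm : ∀ i j, W i j = W j i) (hnonneg : ∀ i j, 0 ≤ W i j)
    (hdiag : ∀ i, W i i = 0) (β : ℝ) (hβ : 0 ≤ β)
    (D : (Fin n → ℂ) → (Fin n → ℂ) → ℝ)
    (hD : D = fun x z => (1 / 2) * ∑ i, ‖z i - x i‖ ^ 2
        + β * ((∑ i, ‖x i‖)
            + (1 / 2) * ∑ i, ∑ j, W i j * (‖x i‖ * ‖x j‖)))
    (x z : Fin n → ℂ) (u : Fin n → ℂ)
    (hu : ∀ i, u i = if z i ≠ 0 then z i / (‖z i‖ : ℂ) else 1) :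
    D (fun i => (‖x i‖ : ℂ)) (fun i => (‖z i‖ : ℂ)) ≤ D x z
    ∧ D (fun i => (‖x i‖ : ℂ) * u i) z
        = D (fun i => (‖x i‖ : ℂ)) (fun i => (‖z i‖ : ℂ)) := by
  have habsu : ∀ i, ‖(‖x i‖ : ℂ) * u i‖ = ‖x i‖ := by
    intro i
    rw [norm_mul, abs_abs_coe, hu i]
    by_cases hz : z i = 0
    · simp [hz]
    · rw [if_pos hz, norm_div, abs_abs_coe, div_self (norm_ne_zero_iff.mpr hz), mul_one]
  have hsub : ∀ i, ‖z i - (‖x i‖ : ℂ) * u i‖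
      = |‖z i‖ - ‖x i‖| := by
    intro i
    by_cases hz : z i = 0
    · simp [hz, hu i, abs_abs_coe]
    · rw [hu i, if_pos hz]
      have hb : (‖z i‖ : ℂ) ≠ 0 := by
        simpa using norm_ne_zero_iff.mpr hz
      have : z i - (‖x i‖ : ℂ) * (z i / (‖z i‖ : ℂ))
          = (z i / (‖z i‖ : ℂ)) * ((‖z i‖ : ℂ) - (‖x i‖ : ℂ)) := by
        field_simp
      rw [this, norm_mul, norm_div, abs_abs_coe, div_self (norm_ne_zero_iff.mpr hz), one_mul,
        abs_coe_sub]
  constructor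
  · subst hD
    simp only [abs_abs_coe]
    gcongr (1/2) * ?_ + β * ?_
    · refine Finset.sum_le_sum fun i _ => ?_
      rw [abs_coe_sub]
      exact pow_le_pow_left₀ (abs_nonneg _) (abs_norm_sub_norm_le _ _) 2
    · exact add_nonneg (sum_nonneg fun i _ => norm_nonneg _) (mul_nonneg (by norm_num) (sum_nonneg fun i _ => sum_nonneg fun j _ => mul_nonneg (hnonneg i j) (mul_nonneg (norm_nonneg _) (norm_nonneg _))))
  · subst hD
    simp only [habsu, abs_abs_coe, hsub, abs_coe_sub]
end

section
/- Let β > 0 and suppose the matrix I + βW is positive definite. Then for every z ∈ ℂⁿ, the function x ↦ D_{β,W}(x; z) has a unique global minimizer over ℂⁿ: there exists x̂ ∈ ℂⁿ with D_{β,W}(x̂; z) < D_{β,W}(x; z) for all x ≠ x̂. -/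
open Finset Matrix

def gAux (n : ℕ) (β : ℝ) (W : Matrix (Fin n) (Fin n) ℝ) (u : Fin n → ℝ) : ℝ :=
  ∑ i, u i ^ 2 + β * ∑ i, ∑ j, W i j * (u i * u j)

lemma gAux_eq_dot (n : ℕ) (β : ℝ) (W : Matrix (Fin n) (Fin n) ℝ) (u : Fin n → ℝ) :
    gAux n β W u = dotProduct u (((1 : Matrix (Fin n) (Fin n) ℝ) + β • W) *ᵥ u) := by
  simp only [gAux, dotProduct, Matrix.mulVec, Matrix.add_apply, Matrix.one_apply,
    Matrix.smul_apply, smul_eq_mul, Finset.mul_sum]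
  rw [← Finset.sum_add_distrib]
  refine Finset.sum_congr rfl fun i _ => ?_
  have : ∀ j, u i * (((if i = j then 1 else 0) + β * W i j) * u j)
      = (if i = j then u i * u j else 0) + β * (W i j * (u i * u j)) := by
    intro j; by_cases h : i = j <;> simp [h] <;> ring
  simp only [this, Finset.sum_add_distrib, Finset.sum_ite_eq, Finset.mem_univ, if_true]
  rw [← Finset.mul_sum]; ring

lemma gAux_mid (n : ℕ) (β : ℝ) (W : Matrix (Fin n) (Fin n) ℝ) (u v : Fin n → ℝ) :
    2 * gAux n β W (fun i => (u i + v i) / 2) + (1/2) * gAux n β W (fun i => u i - v i)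
      = gAux n β W u + gAux n β W v := by
  simp only [gAux]
  have key : ∀ w₁ w₂ w₃ w₄ : Fin n → ℝ, ∀ c₁ c₂ c₃ c₄ : ℝ,
      (∀ i j, c₁ * (W i j * (w₁ i * w₁ j)) + c₂ * (W i j * (w₂ i * w₂ j))
        = c₃ * (W i j * (w₃ i * w₃ j)) + c₄ * (W i j * (w₄ i * w₄ j))) →
      c₁ * (∑ i, ∑ j, W i j * (w₁ i * w₁ j)) + c₂ * (∑ i, ∑ j, W i j * (w₂ i * w₂ j))
        = c₃ * (∑ i, ∑ j, W i j * (w₃ i * w₃ j)) + c₄ * (∑ i, ∑ j, W i j * (w₄ i * w₄ j)) := by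
    intro w₁ w₂ w₃ w₄ c₁ c₂ c₃ c₄ h
    simp only [Finset.mul_sum, ← Finset.sum_add_distrib]
    exact Finset.sum_congr rfl fun i _ => Finset.sum_congr rfl fun j _ => h i j
  have hsq : 2 * (∑ i, ((u i + v i)/2) ^ 2) + (1/2) * (∑ i, (u i - v i) ^ 2)
      = ∑ i, u i ^ 2 + ∑ i, v i ^ 2 := by
    simp only [Finset.mul_sum, ← Finset.sum_add_distrib]
    exact Finset.sum_congr rfl fun i _ => by ring
  have hw := key (fun i => (u i + v i)/2) (fun i => u i - v i) u v (2*β) ((1/2)*β) β β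
    (fun i j => by ring)
  nlinarith [hsq, hw]

lemma gAux_pos (n : ℕ) (β : ℝ) (W : Matrix (Fin n) (Fin n) ℝ)
    (hpd : ((1 : Matrix (Fin n) (Fin n) ℝ) + β • W).PosDef)
    (u : Fin n → ℝ) (hu : u ≠ 0) : 0 < gAux n β W u := by
  have := hpd.dotProduct_mulVec_pos hu
  rwa [gAux_eq_dot]
  -- star u = u over ℝ

lemma gAux_mid_lt (n : ℕ) (β : ℝ) (W : Matrix (Fin n) (Fin n) ℝ)
    (hpd : ((1 : Matrix (Fin n) (Fin n) ℝ) + β • W).PosDef)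
    (u v : Fin n → ℝ) (huv : u ≠ v) :
    2 * gAux n β W (fun i => (u i + v i) / 2) < gAux n β W u + gAux n β W v := by
  have h := gAux_mid n β W u v
  have hd : (fun i => u i - v i) ≠ 0 := by
    intro h0
    apply huv
    funext i
    have := congrFun h0 i
    simp at this
    linarith
  have := gAux_pos n β W hpd _ hd
  linarith

lemma gAux_mono (n : ℕ) (β : ℝ) (hβ : 0 ≤ β) (W : Matrix (Fin n) (Fin n) ℝ)
    (hnonneg : ∀ i j, 0 ≤ W i j) (u v : Fin n → ℝ) (hu : ∀ i, 0 ≤ u i)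
    (huv : ∀ i, u i ≤ v i) : gAux n β W u ≤ gAux n β W v := by
  unfold gAux
  gcongr with i _ i _ j _ <;>
    first
      | exact pow_le_pow_left₀ (hu _) (huv _) 2
      | exact hnonneg _ _
      | exact hu _
      | exact huv _
      | exact (hu _).trans (huv _)

lemma gAux_strict_mono (n : ℕ) (β : ℝ) (hβ : 0 ≤ β) (W : Matrix (Fin n) (Fin n) ℝ)
    (hnonneg : ∀ i j, 0 ≤ W i j) (u v : Fin n → ℝ) (hu : ∀ i, 0 ≤ u i)
    (huv : ∀ i, u i ≤ v i) (i₀ : Fin n) (hi₀ : u i₀ < v i₀) :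
    gAux n β W u < gAux n β W v := by
  unfold gAux
  have h1 : ∑ i, u i ^ 2 < ∑ i, v i ^ 2 := by
    refine Finset.sum_lt_sum (fun i _ => pow_le_pow_left₀ (hu i) (huv i) 2)
      ⟨i₀, Finset.mem_univ i₀, ?_⟩
    have := hu i₀
    nlinarith
  have h2 : β * ∑ i, ∑ j, W i j * (u i * u j) ≤ β * ∑ i, ∑ j, W i j * (v i * v j) := by
    gcongr with i _ j _ <;>
      first
        | exact hnonneg _ _
        | exact hu _
        | exact huv _
        | exact (hu _).trans (huv _)
  linarith

lemma half_re (c : ℂ) : (c / 2).re = c.re / 2 := by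
  simp [Complex.div_re, Complex.normSq]

lemma half_im (c : ℂ) : (c / 2).im = c.im / 2 := by
  simp [Complex.div_im, Complex.normSq]

lemma abs_half_le (a b : ℂ) :
    ‖(a + b) / 2‖ ≤ (‖a‖ + ‖b‖) / 2 := by
  rw [norm_div, Complex.norm_two]
  have := norm_add_le a b
  linarith

lemma abs_half_lt (a b : ℂ) (hab : ‖a‖ = ‖b‖) (hne : a ≠ b) :
    ‖(a + b) / 2‖ < (‖a‖ + ‖b‖) / 2 := by
  rw [norm_div, Complex.norm_two]
  have key : ‖a + b‖ < ‖a‖ + ‖b‖ := by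
    have e1 : ‖a + b‖ ^ 2 = (a.re + b.re) ^ 2 + (a.im + b.im) ^ 2 := by
      rw [Complex.sq_norm, Complex.normSq_apply]
      simp [Complex.add_re, Complex.add_im]; ring
    have e2 : ‖a‖ ^ 2 = a.re ^ 2 + a.im ^ 2 := by
      rw [Complex.sq_norm, Complex.normSq_apply]; ring
    have e3 : ‖b‖ ^ 2 = b.re ^ 2 + b.im ^ 2 := by
      rw [Complex.sq_norm, Complex.normSq_apply]; ring
    have heq : a.re ^ 2 + a.im ^ 2 = b.re ^ 2 + b.im ^ 2 := by
      rw [← e2, ← e3, hab]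
    have hdn : 0 < (a.re - b.re) ^ 2 + (a.im - b.im) ^ 2 := by
      rcases eq_or_ne a.re b.re with hr | hr
      · have him : a.im ≠ b.im := fun h => hne (Complex.ext hr h)
        have h' : a.im - b.im ≠ 0 := sub_ne_zero.mpr him
        have := mul_self_pos.mpr h'
        nlinarith [sq_nonneg (a.re - b.re)]
      · have h' : a.re - b.re ≠ 0 := sub_ne_zero.mpr hr
        have := mul_self_pos.mpr h'
        nlinarith [sq_nonneg (a.im - b.im)]
    by_contra hcon
    push_neg at hcon
    have habs : (0:ℝ) ≤ ‖a‖ + ‖b‖ := by positivity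
    have hple : (‖a‖ + ‖b‖) ^ 2 ≤ ‖a + b‖ ^ 2 :=
      pow_le_pow_left₀ habs hcon 2
    have h4 : (‖a‖ + ‖b‖) ^ 2 = 4 * (a.re ^ 2 + a.im ^ 2) := by
      rw [← hab]; nlinarith [e2]
    nlinarith [hple, h4, e1, heq, hdn]
  linarith

noncomputable def objBody (n : ℕ) (β : ℝ) (W : Matrix (Fin n) (Fin n) ℝ) (z x : Fin n → ℂ) : ℝ :=
  (1 / 2) * ∑ i, ‖z i - x i‖ ^ 2
    + β * ((∑ i, ‖x i‖)
        + (1 / 2) * ∑ i, ∑ j, W i j * (‖x i‖ * ‖x j‖))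

lemma objBody_decomp (n : ℕ) (β : ℝ) (W : Matrix (Fin n) (Fin n) ℝ) (z x : Fin n → ℂ) :
    objBody n β W z x
      = (1 / 2) * ∑ i, ‖z i‖ ^ 2
        - ∑ i, ((z i).re * (x i).re + (z i).im * (x i).im)
        + β * ∑ i, ‖x i‖
        + (1 / 2) * gAux n β W (fun i => ‖x i‖) := by
  unfold objBody gAux
  have h : ∀ i, ‖z i - x i‖ ^ 2
      = ‖z i‖ ^ 2 - 2 * ((z i).re * (x i).re + (z i).im * (x i).im)
        + ‖x i‖ ^ 2 := by
    intro i
    simp only [Complex.sq_norm, Complex.normSq_apply, Complex.sub_re, Complex.sub_im]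
    ring
  simp only [h, Finset.sum_add_distrib, Finset.sum_sub_distrib, ← Finset.mul_sum]
  ring

lemma objBody_mid_lt (n : ℕ) (β : ℝ) (hβ : 0 < β) (W : Matrix (Fin n) (Fin n) ℝ)
    (hnonneg : ∀ i j, 0 ≤ W i j)
    (hpd : ((1 : Matrix (Fin n) (Fin n) ℝ) + β • W).PosDef)
    (z x y : Fin n → ℂ) (hxy : x ≠ y) :
    2 * objBody n β W z (fun i => (x i + y i) / 2)
      < objBody n β W z x + objBody n β W z y := by
  set u : Fin n → ℝ := fun i => ‖x i‖ with hu
  set v : Fin n → ℝ := fun i => ‖y i‖ with hv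
  set mu : Fin n → ℝ := fun i => ‖(x i + y i) / 2‖ with hmu
  have hmu_le : ∀ i, mu i ≤ (u i + v i) / 2 := fun i => abs_half_le (x i) (y i)
  have hmu_nonneg : ∀ i, 0 ≤ mu i := fun i => norm_nonneg _
  have hu_nonneg : ∀ i, 0 ≤ u i := fun i => norm_nonneg _
  -- linear part
  have hL : 2 * ∑ i, ((z i).re * (((x i + y i) / 2)).re + (z i).im * (((x i + y i) / 2)).im)
      = ∑ i, ((z i).re * (x i).re + (z i).im * (x i).im)
        + ∑ i, ((z i).re * (y i).re + (z i).im * (y i).im) := by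
    simp only [Finset.mul_sum, ← Finset.sum_add_distrib]
    refine Finset.sum_congr rfl fun i _ => ?_
    rw [half_re, half_im, Complex.add_re, Complex.add_im]
    ring
  -- ℓ¹ part
  have habs : 2 * ∑ i, mu i ≤ ∑ i, u i + ∑ i, v i := by
    simp only [Finset.mul_sum, ← Finset.sum_add_distrib]
    refine Finset.sum_le_sum fun i _ => ?_
    have := hmu_le i
    linarith
  -- quadratic part
  have hg : 2 * gAux n β W mu < gAux n β W u + gAux n β W v := by
    rcases eq_or_ne u v with huv | huv
    · -- equal moduli, unequal vectors: strict triangle inequality at some index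
      obtain ⟨i₀, hi₀⟩ : ∃ i, x i ≠ y i := by
        by_contra hc
        push_neg at hc
        exact hxy (funext hc)
      have hstrict : mu i₀ < (u i₀ + v i₀) / 2 :=
        abs_half_lt (x i₀) (y i₀) (congrFun huv i₀) hi₀
      have h1 : gAux n β W mu < gAux n β W (fun i => (u i + v i) / 2) :=
        gAux_strict_mono n β hβ.le W hnonneg mu _ hmu_nonneg hmu_le i₀ hstrict
      have h2 := gAux_mid n β W u v
      have h0 : gAux n β W (fun i => u i - v i) = 0 := by
        have : (fun i => u i - v i) = fun _ => (0:ℝ) := by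
          funext i; rw [huv]; ring
        rw [this]; simp [gAux]
      rw [h0] at h2
      linarith
    · have h1 : gAux n β W mu ≤ gAux n β W (fun i => (u i + v i) / 2) :=
        gAux_mono n β hβ.le W hnonneg mu _ hmu_nonneg hmu_le
      have h2 := gAux_mid_lt n β W hpd u v huv
      linarith
  rw [objBody_decomp, objBody_decomp, objBody_decomp]
  have hb := mul_le_mul_of_nonneg_left habs hβ.le
  linarith

lemma objBody_continuous (n : ℕ) (β : ℝ) (W : Matrix (Fin n) (Fin n) ℝ) (z : Fin n → ℂ) :
    Continuous (objBody n β W z) := by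
  unfold objBody
  have habs : ∀ i : Fin n, Continuous fun x : Fin n → ℂ => ‖x i‖ :=
    fun i => continuous_norm.comp (continuous_apply i)
  refine Continuous.add ?_ ?_
  · exact continuous_const.mul (continuous_finset_sum _ fun i _ =>
      (continuous_norm.comp (continuous_const.sub (continuous_apply i))).pow 2)
  · refine continuous_const.mul (Continuous.add (continuous_finset_sum _ fun i _ => habs i)
      (continuous_const.mul (continuous_finset_sum _ fun i _ =>
        continuous_finset_sum _ fun j _ => continuous_const.mul ((habs i).mul (habs j)))))

lemma objBody_quad_le (n : ℕ) (β : ℝ) (hβ : 0 ≤ β) (W : Matrix (Fin n) (Fin n) ℝ)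
    (hnonneg : ∀ i j, 0 ≤ W i j) (z x : Fin n → ℂ) :
    (1 / 2) * ∑ i, ‖z i - x i‖ ^ 2 ≤ objBody n β W z x := by
  unfold objBody
  have h1 : (0:ℝ) ≤ ∑ i, ‖x i‖ :=
    Finset.sum_nonneg fun i _ => norm_nonneg _
  have h2 : (0:ℝ) ≤ ∑ i, ∑ j, W i j * (‖x i‖ * ‖x j‖) :=
    Finset.sum_nonneg fun i _ => Finset.sum_nonneg fun j _ =>
      mul_nonneg (hnonneg i j) (mul_nonneg (norm_nonneg _) (norm_nonneg _))
  nlinarith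


/-- If β > 0 and I + βW is positive definite, then for every z ∈ ℂⁿ the
function x ↦ D_{β,W}(x;z) has a unique global minimizer over ℂⁿ. -/
theorem stmt8 (n : ℕ) (hn : 0 < n) (W : Matrix (Fin n) (Fin n) ℝ)
    (hsymm : ∀ i j, W i j = W j i) (hnonneg : ∀ i j, 0 ≤ W i j)
    (hdiag : ∀ i, W i i = 0) (β : ℝ) (hβ : 0 < β)
    (hpd : ((1 : Matrix (Fin n) (Fin n) ℝ) + β • W).PosDef)
    (D : (Fin n → ℂ) → (Fin n → ℂ) → ℝ)
    (hD : D = fun x z => (1 / 2) * ∑ i, ‖z i - x i‖ ^ 2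
        + β * ((∑ i, ‖x i‖)
            + (1 / 2) * ∑ i, ∑ j, W i j * (‖x i‖ * ‖x j‖)))
    (z : Fin n → ℂ) :
    ∃ xhat : Fin n → ℂ, ∀ x : Fin n → ℂ, x ≠ xhat → D xhat z < D x z := by
  have hDeq : ∀ x, D x z = objBody n β W z x := by
    subst hD; intro x; rfl
  set f : (Fin n → ℂ) → ℝ := objBody n β W z with hf
  -- f 0 is nonnegative
  have hf0 : 0 ≤ f 0 := le_trans (by positivity) (objBody_quad_le n β hβ.le W hnonneg z 0)
  set R : ℝ := ‖z‖ + Real.sqrt (2 * f 0) + 1 with hR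
  have hR0 : 0 ≤ R := by
    have := norm_nonneg z
    have := Real.sqrt_nonneg (2 * f 0)
    linarith
  -- outside the ball of radius R, f exceeds f 0
  have hout : ∀ x : Fin n → ℂ, R < ‖x‖ → f 0 < f x := by
    intro x hx
    have : ¬ (∀ i, ‖x i‖ ≤ R) := by
      intro hall
      exact absurd ((pi_norm_le_iff_of_nonneg hR0).mpr hall) (not_le.mpr hx)
    push_neg at this
    obtain ⟨i, hi⟩ := this
    have hzi : ‖z i‖ ≤ ‖z‖ := norm_le_pi_norm z i
    have hlow : Real.sqrt (2 * f 0) + 1 < ‖z i - x i‖ := by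
      have h1 : ‖x i‖ - ‖z i‖ ≤ ‖z i - x i‖ := by
        have := norm_sub_norm_le (x i) (z i)
        rw [norm_sub_rev] at this
        linarith
      linarith
    have hsq : 2 * f 0 < ‖z i - x i‖ ^ 2 := by
      have hs := Real.sq_sqrt (by linarith : (0:ℝ) ≤ 2 * f 0)
      have hs0 := Real.sqrt_nonneg (2 * f 0)
      nlinarith
    have hterm : ‖z i - x i‖ ^ 2 ≤ ∑ j, ‖z j - x j‖ ^ 2 :=
      Finset.single_le_sum (f := fun j => ‖z j - x j‖ ^ 2)
        (fun j _ => by positivity) (Finset.mem_univ i)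
    have := objBody_quad_le n β hβ.le W hnonneg z x
    rw [← hf] at this
    linarith
  -- minimize over the closed ball
  have hcomp : IsCompact (Metric.closedBall (0 : Fin n → ℂ) R) := isCompact_closedBall _ _
  have hne : (Metric.closedBall (0 : Fin n → ℂ) R).Nonempty :=
    ⟨0, Metric.mem_closedBall_self hR0⟩
  obtain ⟨xhat, hmem, hmin⟩ := hcomp.exists_isMinOn hne
    ((objBody_continuous n β W z).continuousOn)
  have hglobal : ∀ x, f xhat ≤ f x := by
    intro x
    rcases le_or_gt ‖x‖ R with hxR | hxR
    · exact hmin (by simpa [Metric.mem_closedBall, dist_zero_right] using hxR)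
    · have h0mem : (0 : Fin n → ℂ) ∈ Metric.closedBall (0 : Fin n → ℂ) R :=
        Metric.mem_closedBall_self hR0
      have := hmin h0mem
      have := hout x hxR
      simp only [Set.mem_setOf_eq] at *
      linarith [hmin h0mem, hout x hxR]
  refine ⟨xhat, fun x hx => ?_⟩
  rw [hDeq, hDeq]
  have hmid := objBody_mid_lt n β hβ W hnonneg hpd z xhat x (Ne.symm hx)
  have h1 : f xhat ≤ f (fun i => (xhat i + x i) / 2) := hglobal _
  linarith
end

section
/- Let β > 0, suppose I + βW is positive semidefinite with spectral norm σ > 0, let z ∈ ℂⁿ, and let 0 < η ≤ 2/σ. Define S : ℝⁿ → ℝⁿ₊ by S(x) = P₊(x − η[(I + βW)x + β𝟙 − |z|]). Then for every x in the nonnegative orthant ℝⁿ₊, D_{β,W}(x; |z|) − D_{β,W}(S(x); |z|) ≥ (1/η − σ/2)·‖x − S(x)‖₂² ≥ 0. -/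
open Finset
open scoped RealInnerProductSpace

theorem quad_bound_aux (n : ℕ) (A : Matrix (Fin n) (Fin n) ℝ) (d : Fin n → ℝ) :
    ∑ i, ∑ j, A i j * d i * d j ≤
      ‖Matrix.toEuclideanCLM (𝕜 := ℝ) A‖ * ∑ i, d i ^ 2 := by
  set v : EuclideanSpace ℝ (Fin n) := (WithLp.equiv 2 _).symm d with hv
  have hvi : ∀ i, v i = d i := fun i => rfl
  have h1 : Matrix.toEuclideanCLM (𝕜 := ℝ) A v = (WithLp.equiv 2 _).symm (A.mulVec d) :=
    Matrix.toEuclideanCLM_toLp A d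
  have h2 : ∑ i, ∑ j, A i j * d i * d j = ⟪Matrix.toEuclideanCLM (𝕜 := ℝ) A v, v⟫ := by
    rw [h1]
    simp only [PiLp.inner_apply, RCLike.inner_apply, starRingEnd_apply, star_trivial,
      WithLp.equiv_symm_apply, WithLp.ofLp_toLp, Matrix.mulVec, dotProduct]
    rw [Finset.sum_congr rfl (fun i _ => Finset.mul_sum _ _ _)]
    exact Finset.sum_congr rfl fun i _ => Finset.sum_congr rfl fun j _ => by rw [hvi]; ring
  have h3 : ∑ i, d i ^ 2 = ‖v‖ ^ 2 := by
    rw [← real_inner_self_eq_norm_sq]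
    simp only [PiLp.inner_apply, RCLike.inner_apply, starRingEnd_apply, star_trivial, hvi, sq]
  rw [h2, h3]
  calc ⟪Matrix.toEuclideanCLM (𝕜 := ℝ) A v, v⟫
      ≤ ‖Matrix.toEuclideanCLM (𝕜 := ℝ) A v‖ * ‖v‖ := real_inner_le_norm _ _
    _ ≤ (‖Matrix.toEuclideanCLM (𝕜 := ℝ) A‖ * ‖v‖) * ‖v‖ := by
        gcongr
        exact (Matrix.toEuclideanCLM (𝕜 := ℝ) A).le_opNorm v
    _ = ‖Matrix.toEuclideanCLM (𝕜 := ℝ) A‖ * ‖v‖ ^ 2 := by ring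


/-- With I + βW psd of spectral norm σ > 0 and 0 < η ≤ 2/σ, one projected
gradient step S satisfies, for every x in the nonnegative orthant,
D_{β,W}(x;|z|) − D_{β,W}(S(x);|z|) ≥ (1/η − σ/2)‖x − S(x)‖₂² ≥ 0. -/
theorem stmt10 (n : ℕ) (hn : 0 < n) (W : Matrix (Fin n) (Fin n) ℝ)
    (hsymm : ∀ i j, W i j = W j i) (hnonneg : ∀ i j, 0 ≤ W i j)
    (hdiag : ∀ i, W i i = 0) (β : ℝ) (hβ : 0 < β)
    (hpsd : ((1 : Matrix (Fin n) (Fin n) ℝ) + β • W).PosSemidef)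
    (σ : ℝ) (hσpos : 0 < σ)
    (hσ : σ = ‖Matrix.toEuclideanCLM (𝕜 := ℝ) ((1 : Matrix (Fin n) (Fin n) ℝ) + β • W)‖)
    (z : Fin n → ℂ) (η : ℝ) (hη0 : 0 < η) (hη : η ≤ 2 / σ)
    (S : (Fin n → ℝ) → (Fin n → ℝ))
    (hS : S = fun x i => max (x i
        - η * ((((1 : Matrix (Fin n) (Fin n) ℝ) + β • W).mulVec x) i
            + β - ‖z i‖)) 0)
    (Dr : (Fin n → ℝ) → ℝ)
    (hDr : Dr = fun x => (1 / 2) * ∑ i, (‖z i‖ - x i) ^ 2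
        + β * ((∑ i, |x i|) + (1 / 2) * ∑ i, ∑ j, W i j * (|x i| * |x j|))) :
    ∀ x : Fin n → ℝ, (∀ i, 0 ≤ x i) →
      (1 / η - σ / 2) * ∑ i, (x i - S x i) ^ 2 ≤ Dr x - Dr (S x)
      ∧ 0 ≤ (1 / η - σ / 2) * ∑ i, (x i - S x i) ^ 2 := by
  intro x hx
  set y : Fin n → ℝ := S x with hy
  set g : Fin n → ℝ :=
    fun i => (((1 : Matrix (Fin n) (Fin n) ℝ) + β • W).mulVec x) i + β - ‖z i‖
    with hgdef
  -- basic facts about y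
  have hyi : ∀ i, y i = max (x i - η * g i) 0 := by
    intro i; simp only [hy, hS, hgdef]
  have hy0 : ∀ i, 0 ≤ y i := fun i => by rw [hyi]; exact le_max_right _ _
  -- pointwise projection inequality
  have hstep : ∀ i, (x i - y i) ^ 2 ≤ η * (g i * (x i - y i)) := by
    intro i
    rcases le_or_gt 0 (x i - η * g i) with h | h
    · have : y i = x i - η * g i := by rw [hyi]; exact max_eq_left h
      rw [this]; nlinarith [sq_nonneg (η * g i)]
    · have hyz : y i = 0 := by rw [hyi]; exact max_eq_right h.le
      rw [hyz]
      nlinarith [hx i]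
  have hsum1 : ∑ i, (x i - y i) ^ 2 ≤ η * ∑ i, g i * (x i - y i) := by
    rw [Finset.mul_sum]
    exact Finset.sum_le_sum fun i _ => hstep i
  have h1η : (1 / η) * ∑ i, (x i - y i) ^ 2 ≤ ∑ i, g i * (x i - y i) := by
    rw [one_div, inv_mul_le_iff₀ hη0]; exact hsum1
  -- mulVec expansion
  have hAx : ∀ i, (((1 : Matrix (Fin n) (Fin n) ℝ) + β • W).mulVec x) i
      = x i + β * ∑ j, W i j * x j := by
    intro i
    simp only [Matrix.mulVec, dotProduct, Matrix.add_apply, Matrix.smul_apply,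
      smul_eq_mul, Matrix.one_apply, add_mul, ite_mul, one_mul, zero_mul,
      Finset.sum_add_distrib, Finset.sum_ite_eq, Finset.mem_univ, if_true]
    rw [Finset.mul_sum]
    exact congrArg _ (Finset.sum_congr rfl fun j _ => by ring)
  -- abs removal
  have hax : ∀ i, |x i| = x i := fun i => abs_of_nonneg (hx i)
  have hay : ∀ i, |y i| = y i := fun i => abs_of_nonneg (hy0 i)
  have hDx : Dr x = (1 / 2) * ∑ i, (‖z i‖ - x i) ^ 2
      + β * ((∑ i, x i) + (1 / 2) * ∑ i, ∑ j, W i j * (x i * x j)) := by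
    rw [hDr]; simp only [hax]
  have hDy : Dr y = (1 / 2) * ∑ i, (‖z i‖ - y i) ^ 2
      + β * ((∑ i, y i) + (1 / 2) * ∑ i, ∑ j, W i j * (y i * y j)) := by
    rw [hDr]; simp only [hay]
  -- symmetry swap
  have hswap : ∑ i, ∑ j, W i j * (y i * x j) = ∑ i, ∑ j, W i j * (x i * y j) := by
    rw [Finset.sum_comm]
    exact Finset.sum_congr rfl fun k _ => Finset.sum_congr rfl fun m _ => by
      rw [hsymm m k]; ring
  -- gradient sum expansion
  have hgd : ∑ i, g i * (x i - y i)
      = ∑ i, ((x i + β - ‖z i‖) * (x i - y i))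
        + β * ∑ i, ∑ j, W i j * ((x i - y i) * x j) := by
    rw [Finset.mul_sum, ← Finset.sum_add_distrib]
    refine Finset.sum_congr rfl fun i _ => ?_
    rw [hgdef]
    simp only [hAx i]
    have e : ∑ j, W i j * ((x i - y i) * x j) = (∑ j, W i j * x j) * (x i - y i) := by
      rw [Finset.sum_mul]
      exact Finset.sum_congr rfl fun j _ => by ring
    rw [e]; ring
  -- bilinear expansions
  have hexp1 : ∑ i, ∑ j, W i j * ((x i - y i) * x j)
      = ∑ i, ∑ j, W i j * (x i * x j) - ∑ i, ∑ j, W i j * (y i * x j) := by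
    rw [← Finset.sum_sub_distrib]
    refine Finset.sum_congr rfl fun i _ => ?_
    rw [← Finset.sum_sub_distrib]
    exact Finset.sum_congr rfl fun j _ => by ring
  have hexp2 : ∑ i, ∑ j, W i j * ((x i - y i) * (x j - y j))
      = ∑ i, ∑ j, W i j * (x i * x j) - ∑ i, ∑ j, W i j * (x i * y j)
        - ∑ i, ∑ j, W i j * (y i * x j) + ∑ i, ∑ j, W i j * (y i * y j) := by
    simp only [← Finset.sum_sub_distrib, ← Finset.sum_add_distrib]
    exact Finset.sum_congr rfl fun i _ => Finset.sum_congr rfl fun j _ => by ring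
  -- single sum identity
  have hsingle : ∑ i, ((x i + β - ‖z i‖) * (x i - y i))
      = (1 / 2) * ∑ i, (‖z i‖ - x i) ^ 2
        - (1 / 2) * ∑ i, (‖z i‖ - y i) ^ 2
        + β * ((∑ i, x i) - ∑ i, y i)
        + (1 / 2) * ∑ i, (x i - y i) ^ 2 := by
    have h : ∀ i, (x i + β - ‖z i‖) * (x i - y i)
        = (1 / 2) * (‖z i‖ - x i) ^ 2 - (1 / 2) * (‖z i‖ - y i) ^ 2
          + β * (x i - y i) + (1 / 2) * (x i - y i) ^ 2 := fun i => by ring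
    rw [Finset.sum_congr rfl fun i _ => h i]
    simp only [Finset.sum_add_distrib, Finset.sum_sub_distrib, ← Finset.mul_sum]
  -- main identity
  have hid : Dr x - Dr y = ∑ i, g i * (x i - y i)
      - (1 / 2) * ∑ i, (x i - y i) ^ 2
      - (β / 2) * ∑ i, ∑ j, W i j * ((x i - y i) * (x j - y j)) := by
    rw [hDx, hDy, hgd, hexp1, hexp2, hswap, hsingle]; ring
  -- quadratic bound
  have hqb : ∑ i, ∑ j, ((1 : Matrix (Fin n) (Fin n) ℝ) + β • W) i j * (x i - y i) * (x j - y j)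
      ≤ σ * ∑ i, (x i - y i) ^ 2 := by
    rw [hσ]; exact quad_bound_aux n _ (fun i => x i - y i)
  have hAdd : ∑ i, ∑ j, ((1 : Matrix (Fin n) (Fin n) ℝ) + β • W) i j * (x i - y i) * (x j - y j)
      = ∑ i, (x i - y i) ^ 2 + β * ∑ i, ∑ j, W i j * ((x i - y i) * (x j - y j)) := by
    have h1 : ∀ i, ∑ j, ((1 : Matrix (Fin n) (Fin n) ℝ) + β • W) i j * (x i - y i) * (x j - y j)
        = ∑ j, ((if i = j then (x i - y i) * (x j - y j) else 0)
            + β * (W i j * ((x i - y i) * (x j - y j)))) := by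
      intro i
      refine Finset.sum_congr rfl fun j _ => ?_
      by_cases h : i = j <;>
        simp [Matrix.add_apply, Matrix.one_apply, h] <;> ring
    rw [Finset.sum_congr rfl fun i _ => h1 i]
    simp only [Finset.sum_add_distrib, Finset.sum_ite_eq, Finset.mem_univ, if_true,
      ← Finset.mul_sum, pow_two]
  have hquadβ : β * ∑ i, ∑ j, W i j * ((x i - y i) * (x j - y j))
      ≤ σ * ∑ i, (x i - y i) ^ 2 - ∑ i, (x i - y i) ^ 2 := by linarith [hqb, hAdd]
  -- nonnegativity of the coefficient
  have hcoef : 0 ≤ 1 / η - σ / 2 := by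
    have h2σ : 0 < 2 / σ := by positivity
    have : 1 / (2 / σ) ≤ 1 / η := one_div_le_one_div_of_le hη0 hη
    rw [one_div_div] at this
    linarith
  have hP : 0 ≤ ∑ i, (x i - y i) ^ 2 := Finset.sum_nonneg fun i _ => sq_nonneg _
  constructor
  · linarith [hid, h1η, hquadβ]
  · exact mul_nonneg hcoef hP
end

section
/- Let β > 0, suppose I + βW is positive semidefinite with spectral norm σ > 0, let z ∈ ℂⁿ, let 0 < η ≤ 2/σ, and define S : ℝⁿ → ℝⁿ₊ by S(x) = P₊(x − η[(I + βW)x + β𝟙 − |z|]). Then for every x ∈ ℝⁿ₊ and every integer m ≥ 1, D_{β,W}(S^m(x); |z|) ≤ D_{β,W}(x; |z|), where S^m denotes S iterated m times. -/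
open Finset Matrix RealInnerProductSpace

section Aux
variable {n : ℕ}

lemma dot_sym (A : Matrix (Fin n) (Fin n) ℝ) (hA : ∀ i j, A i j = A j i)
    (u v : Fin n → ℝ) : u ⬝ᵥ A.mulVec v = v ⬝ᵥ A.mulVec u := by
  simp only [dotProduct, Matrix.mulVec, Finset.mul_sum]
  rw [Finset.sum_comm]
  refine Finset.sum_congr rfl fun i _ => Finset.sum_congr rfl fun j _ => ?_
  rw [hA j i]; ring

lemma step_descent (A : Matrix (Fin n) (Fin n) ℝ)
    (hA : ∀ i j, A i j = A j i) (σ η : ℝ) (hη0 : 0 < η) (hησ : η * σ ≤ 2)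
    (hbound : ∀ d : Fin n → ℝ, d ⬝ᵥ A.mulVec d ≤ σ * (d ⬝ᵥ d))
    (b x : Fin n → ℝ) (hx : ∀ i, 0 ≤ x i)
    (y : Fin n → ℝ) (hy : y = fun i => max (x i - η * ((A.mulVec x) i + b i)) 0) :
    (1/2) * (y ⬝ᵥ A.mulVec y) + b ⬝ᵥ y ≤ (1/2) * (x ⬝ᵥ A.mulVec x) + b ⬝ᵥ x := by
  set g : Fin n → ℝ := A.mulVec x + b with hg
  set d : Fin n → ℝ := y - x with hd
  have hyd : y = x + d := by funext i; simp [hd]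
  have hproj : ∀ i, (d i + η * g i) * d i ≤ 0 := by
    intro i
    have hgi : g i = (A.mulVec x) i + b i := rfl
    by_cases h : 0 ≤ x i - η * g i
    · have hyi : y i = x i - η * g i := by rw [hy]; simp only [hgi]; exact max_eq_left h
      have : d i = - (η * g i) := by simp [hd, hyi]
      rw [this]; ring_nf; simp
    · have hyi : y i = 0 := by
        rw [hy]; simp only [hgi]; exact max_eq_right (le_of_lt (not_le.mp h))
      have hdi : d i = - x i := by simp [hd, hyi]
      have h1 : 0 ≤ d i + η * g i := by rw [hdi]; nlinarith [not_le.mp h]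
      have h2 : d i ≤ 0 := by rw [hdi]; linarith [hx i]
      exact mul_nonpos_of_nonneg_of_nonpos h1 h2
  have hsum : d ⬝ᵥ d + η * (g ⬝ᵥ d) ≤ 0 := by
    have : ∑ i, (d i + η * g i) * d i ≤ 0 :=
      Finset.sum_nonpos fun i _ => hproj i
    calc d ⬝ᵥ d + η * (g ⬝ᵥ d) = ∑ i, (d i + η * g i) * d i := by
          simp only [dotProduct, Finset.mul_sum, ← Finset.sum_add_distrib]
          exact Finset.sum_congr rfl fun i _ => by ring
      _ ≤ 0 := this
  have hdd : (0:ℝ) ≤ d ⬝ᵥ d := Finset.sum_nonneg fun i _ => mul_self_nonneg _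
  have hAd : d ⬝ᵥ A.mulVec d ≤ σ * (d ⬝ᵥ d) := hbound d
  have expand : y ⬝ᵥ A.mulVec y
      = x ⬝ᵥ A.mulVec x + 2 * (d ⬝ᵥ A.mulVec x) + d ⬝ᵥ A.mulVec d := by
    rw [hyd, Matrix.mulVec_add, dotProduct_add, add_dotProduct,
      add_dotProduct, dot_sym A hA x d]
    ring
  have hby : b ⬝ᵥ y = b ⬝ᵥ x + b ⬝ᵥ d := by rw [hyd, dotProduct_add]
  have hgd : g ⬝ᵥ d = d ⬝ᵥ A.mulVec x + b ⬝ᵥ d := by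
    rw [hg, add_dotProduct, dotProduct_comm]
  nlinarith [mul_le_mul_of_nonneg_left hAd (le_of_lt (half_pos hη0)),
    mul_le_mul_of_nonneg_right hησ hdd]

end Aux

/-- With I + βW psd of spectral norm σ > 0 and 0 < η ≤ 2/σ, for every x in
the nonnegative orthant and every m ≥ 1, D_{β,W}(S^m(x);|z|) ≤ D_{β,W}(x;|z|). -/
theorem stmt11 (n : ℕ) (hn : 0 < n) (W : Matrix (Fin n) (Fin n) ℝ)
    (hsymm : ∀ i j, W i j = W j i) (hnonneg : ∀ i j, 0 ≤ W i j)
    (hdiag : ∀ i, W i i = 0) (β : ℝ) (hβ : 0 < β)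
    (hpsd : ((1 : Matrix (Fin n) (Fin n) ℝ) + β • W).PosSemidef)
    (σ : ℝ) (hσpos : 0 < σ)
    (hσ : σ = ‖Matrix.toEuclideanCLM (𝕜 := ℝ) ((1 : Matrix (Fin n) (Fin n) ℝ) + β • W)‖)
    (z : Fin n → ℂ) (η : ℝ) (hη0 : 0 < η) (hη : η ≤ 2 / σ)
    (S : (Fin n → ℝ) → (Fin n → ℝ))
    (hS : S = fun x i => max (x i
        - η * ((((1 : Matrix (Fin n) (Fin n) ℝ) + β • W).mulVec x) i
            + β - ‖z i‖)) 0)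
    (Dr : (Fin n → ℝ) → ℝ)
    (hDr : Dr = fun x => (1 / 2) * ∑ i, (‖z i‖ - x i) ^ 2
        + β * ((∑ i, |x i|) + (1 / 2) * ∑ i, ∑ j, W i j * (|x i| * |x j|))) :
    ∀ x : Fin n → ℝ, (∀ i, 0 ≤ x i) → ∀ m : ℕ, 1 ≤ m → Dr (S^[m] x) ≤ Dr x := by
  set A : Matrix (Fin n) (Fin n) ℝ := (1 : Matrix (Fin n) (Fin n) ℝ) + β • W with hAdef
  set b : Fin n → ℝ := fun i => β - ‖z i‖ with hb
  set c : ℝ := (1/2) * ∑ i, (‖z i‖)^2 with hc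
  have hA : ∀ i j, A i j = A j i := by
    intro i j
    simp [hAdef, Matrix.add_apply, Matrix.smul_apply, Matrix.one_apply, hsymm i j, eq_comm]
  -- spectral bound
  have hbound : ∀ d : Fin n → ℝ, d ⬝ᵥ A.mulVec d ≤ σ * (d ⬝ᵥ d) := by
    intro dv
    set v : EuclideanSpace ℝ (Fin n) := (WithLp.equiv 2 (Fin n → ℝ)).symm dv with hv
    have h1 : dv ⬝ᵥ A.mulVec dv = ⟪v, Matrix.toEuclideanCLM (𝕜 := ℝ) A v⟫ := by
      rw [hv, WithLp.equiv_symm_apply, Matrix.toEuclideanCLM_toLp]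
      simp [PiLp.inner_apply, RCLike.inner_apply, dotProduct,
        Matrix.toLin'_apply, PiLp.toLp_apply, mul_comm]
    have h2 : ⟪v, v⟫ = dv ⬝ᵥ dv := by
      rw [hv, WithLp.equiv_symm_apply, PiLp.inner_apply]
      simp [RCLike.inner_apply, dotProduct, PiLp.toLp_apply, sq]
    have h3 := real_inner_le_norm v (Matrix.toEuclideanCLM (𝕜 := ℝ) A v)
    have h4 := (Matrix.toEuclideanCLM (𝕜 := ℝ) A).le_opNorm v
    have h5 : ‖v‖ * ‖v‖ = dv ⬝ᵥ dv := by
      rw [← real_inner_self_eq_norm_mul_norm, h2]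
    rw [← hσ] at h4
    nlinarith [norm_nonneg v, norm_nonneg (Matrix.toEuclideanCLM (𝕜 := ℝ) A v)]
  have hησ : η * σ ≤ 2 := by
    rw [div_eq_mul_inv] at hη
    calc η * σ ≤ (2 * σ⁻¹) * σ := mul_le_mul_of_nonneg_right hη hσpos.le
      _ = 2 := by field_simp
  -- Dr equals quadratic form plus constant on nonnegative vectors
  have hDrG : ∀ u : Fin n → ℝ, (∀ i, 0 ≤ u i) →
      Dr u = (1/2) * (u ⬝ᵥ A.mulVec u) + b ⬝ᵥ u + c := by
    intro u hu
    have habs : ∀ i, |u i| = u i := fun i => abs_of_nonneg (hu i)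
    have hdbl : ∑ i, ∑ j, W i j * (u i * u j) = ∑ i, u i * ∑ j, W i j * u j :=
      Finset.sum_congr rfl fun i _ => by
        rw [Finset.mul_sum]; exact Finset.sum_congr rfl fun j _ => by ring
    have hquad : u ⬝ᵥ A.mulVec u
        = ∑ i, u i ^ 2 + β * ∑ i, u i * ∑ j, W i j * u j := by
      have hmvA : A.mulVec u = u + β • (W.mulVec u) := by
        rw [hAdef, Matrix.add_mulVec, Matrix.one_mulVec, Matrix.smul_mulVec]
      have hrhs : ∑ i, (u i ^ 2 + β * (u i * ∑ j, W i j * u j))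
          = ∑ i, u i ^ 2 + β * ∑ i, u i * ∑ j, W i j * u j := by
        rw [Finset.sum_add_distrib, ← Finset.mul_sum]
      rw [hmvA, ← hrhs]
      simp only [dotProduct, Pi.add_apply, Pi.smul_apply, smul_eq_mul,
        Matrix.mulVec, dotProduct]
      exact Finset.sum_congr rfl fun i _ => by ring
    have hbu : b ⬝ᵥ u = ∑ i, (β - ‖z i‖) * u i := rfl
    have e1 : ∑ i, (‖z i‖ - u i) ^ 2
        = ∑ i, (‖z i‖) ^ 2 - 2 * ∑ i, ‖z i‖ * u i
          + ∑ i, u i ^ 2 := by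
      have h0 : ∑ i, (‖z i‖ - u i) ^ 2
          = ∑ i, ((‖z i‖) ^ 2 - 2 * (‖z i‖ * u i) + u i ^ 2) :=
        Finset.sum_congr rfl fun i _ => by ring
      rw [h0, Finset.sum_add_distrib, Finset.sum_sub_distrib, ← Finset.mul_sum]
    have e2 : ∑ i, (β - ‖z i‖) * u i
        = β * ∑ i, u i - ∑ i, ‖z i‖ * u i := by
      have h0 : ∑ i, (β - ‖z i‖) * u i
          = ∑ i, (β * u i - ‖z i‖ * u i) :=
        Finset.sum_congr rfl fun i _ => by ring
      rw [h0, Finset.sum_sub_distrib, ← Finset.mul_sum]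
    rw [hDr]
    simp only [habs]
    rw [hquad, hdbl, hbu, e1, e2, hc]
    ring
  -- one-step descent
  have hSnn : ∀ x : Fin n → ℝ, ∀ i, 0 ≤ S x i := by
    intro x i; rw [hS]; exact le_max_right _ _
  have hstep : ∀ x : Fin n → ℝ, (∀ i, 0 ≤ x i) → Dr (S x) ≤ Dr x := by
    intro x hx
    have hSx : S x = fun i => max (x i - η * ((A.mulVec x) i + b i)) 0 := by
      rw [hS]; funext i
      congr 2
      rw [hb]; ring
    have hkey := step_descent A hA σ η hη0 hησ hbound b x hx (S x) hSx
    rw [hDrG x hx, hDrG (S x) (hSnn x)]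
    linarith
  have main : ∀ m : ℕ, ∀ x : Fin n → ℝ, (∀ i, 0 ≤ x i) → Dr (S^[m] x) ≤ Dr x := by
    intro m
    induction m with
    | zero => intro x _; simp
    | succ k ih =>
      intro x hx
      rw [Function.iterate_succ_apply]
      exact le_trans (ih (S x) (hSnn x)) (hstep x hx)
  intro x hx m _
  exact main m x hx
end

section
/- Suppose: f : ℂⁿ → ℝ is convex and Fréchet differentiable with ∇f Lipschitz continuous with constant L > 0; λ > 0; 0 < α ≤ 1/L; β = αλ; I + βW is positive semidefinite with spectral norm σ > 0; and 0 < η ≤ 2/σ. Fix x^k ∈ ℂⁿ, set z = x^k − α∇f(x^k), define S : ℝⁿ → ℝⁿ₊ by S(x) = P₊(x − η[(I + βW)x + β𝟙 − |z|]), and let u ∈ ℂⁿ be the phase vector with uᵢ = zᵢ/|zᵢ| if zᵢ ≠ 0 and uᵢ = 1 otherwise. Then for every integer m ≥ 1, with C(x) = f(x) + λ·P_W(x), one has C(S^m(|x^k|) ⊙ u) ≤ C(x^k), where ⊙ denotes componentwise product and S^m denotes S iterated m times. -/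
open Matrix

section Aux

lemma descent_lem {n : ℕ} (f : EuclideanSpace ℂ (Fin n) → ℝ)
    (gradf : EuclideanSpace ℂ (Fin n) → EuclideanSpace ℂ (Fin n))
    (hdiff : ∀ x, HasGradientAt f (gradf x) x)
    (L : ℝ)
    (hlip : ∀ x y, ‖gradf x - gradf y‖ ≤ L * ‖x - y‖)
    (x y : EuclideanSpace ℂ (Fin n)) :
    f y ≤ f x + (inner ℝ (gradf x) (y - x) : ℝ) + L / 2 * ‖y - x‖ ^ 2 := by
  set v := y - x with hv
  have hderiv : ∀ t : ℝ, HasDerivAt (fun t : ℝ => f (x + t • v))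
      ((inner ℝ (gradf (x + t • v)) v : ℝ)) t := by
    intro t
    have h1 : HasDerivAt (fun t : ℝ => x + t • v) v t := by
      simpa using ((hasDerivAt_id t).smul_const v).const_add x
    have h2 := (hdiff (x + t • v)).hasFDerivAt
    have h3 := h2.comp_hasDerivAt t h1
    simpa [InnerProductSpace.toDual_apply_apply, Function.comp_def] using h3
  set c : ℝ := (inner ℝ (gradf x) v : ℝ) with hc
  set ψ : ℝ → ℝ := fun t => f (x + t • v) - t * c - L * ‖v‖ ^ 2 * t ^ 2 / 2 with hψ
  have hψd : ∀ t : ℝ, HasDerivAt ψ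
      ((inner ℝ (gradf (x + t • v)) v : ℝ) - c - L * ‖v‖ ^ 2 * t) t := by
    intro t
    have := ((hderiv t).sub ((hasDerivAt_id t).mul_const c)).sub
      (((hasDerivAt_pow 2 t).const_mul (L * ‖v‖ ^ 2)).div_const 2)
    convert this using 1
    · rfl
    · rfl
    · rfl
    ring
  have hmono : ψ 1 ≤ ψ 0 := by
    have hanti : AntitoneOn ψ (Set.Icc 0 1) := by
      apply antitoneOn_of_deriv_nonpos (convex_Icc 0 1)
      · exact fun t _ => ((hψd t).continuousAt).continuousWithinAt
      · exact fun t _ => (hψd t).differentiableAt.differentiableWithinAt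
      · intro t ht
        rw [interior_Icc] at ht
        rw [(hψd t).deriv]
        have h4 : (inner ℝ (gradf (x + t • v)) v : ℝ) - c
            = (inner ℝ (gradf (x + t • v) - gradf x) v : ℝ) := by
          rw [inner_sub_left]
        have h5 : (inner ℝ (gradf (x + t • v) - gradf x) v : ℝ) ≤ L * t * ‖v‖ ^ 2 := by
          calc (inner ℝ (gradf (x + t • v) - gradf x) v : ℝ)
              ≤ ‖gradf (x + t • v) - gradf x‖ * ‖v‖ := real_inner_le_norm _ _
            _ ≤ (L * ‖(x + t • v) - x‖) * ‖v‖ := by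
                gcongr; exact hlip _ _
            _ = L * t * ‖v‖ ^ 2 := by
                simp only [add_sub_cancel_left, norm_smul, Real.norm_eq_abs,
                  abs_of_pos ht.1]
                ring
        rw [h4]
        nlinarith [h5]
    exact hanti (Set.mem_Icc.2 ⟨le_refl 0, zero_le_one⟩)
      (Set.mem_Icc.2 ⟨zero_le_one, le_refl 1⟩) zero_le_one
  have h0 : ψ 0 = f x := by simp [hψ]
  have h1 : ψ 1 = f y - c - L * ‖v‖ ^ 2 / 2 := by
    simp [hψ, hv]
  rw [h0, h1] at hmono
  have : f y ≤ f x + c + L * ‖v‖ ^ 2 / 2 := by linarith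
  calc f y ≤ f x + c + L * ‖v‖ ^ 2 / 2 := this
    _ = f x + (inner ℝ (gradf x) (y - x) : ℝ) + L / 2 * ‖y - x‖ ^ 2 := by
        rw [hc, hv]; ring

lemma quad_bound {n : ℕ} (A : Matrix (Fin n) (Fin n) ℝ) (v : Fin n → ℝ) :
    v ⬝ᵥ A.mulVec v ≤ ‖Matrix.toEuclideanCLM (𝕜 := ℝ) A‖ * (v ⬝ᵥ v) := by
  set v' : EuclideanSpace ℝ (Fin n) := (WithLp.equiv 2 _).symm v with hv'
  have h1 : A.mulVec v = WithLp.equiv 2 _ (Matrix.toEuclideanCLM (𝕜 := ℝ) A v') := by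
    rw [hv']
    simp
  have h2 : v ⬝ᵥ A.mulVec v = (inner ℝ v' (Matrix.toEuclideanCLM (𝕜 := ℝ) A v') : ℝ) := by
    rw [Matrix.inner_toEuclideanCLM]
    rfl
  have h3 : v ⬝ᵥ v = ‖v'‖ ^ 2 := by
    rw [← real_inner_self_eq_norm_sq, PiLp.inner_apply]
    rfl
  rw [h2, h3]
  calc (inner ℝ v' (Matrix.toEuclideanCLM (𝕜 := ℝ) A v') : ℝ)
      ≤ ‖v'‖ * ‖Matrix.toEuclideanCLM (𝕜 := ℝ) A v'‖ := real_inner_le_norm _ _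
    _ ≤ ‖v'‖ * (‖Matrix.toEuclideanCLM (𝕜 := ℝ) A‖ * ‖v'‖) := by
        gcongr; exact (Matrix.toEuclideanCLM (𝕜 := ℝ) A).le_opNorm v'
    _ = ‖Matrix.toEuclideanCLM (𝕜 := ℝ) A‖ * ‖v'‖ ^ 2 := by ring

lemma quad_taylor {n : ℕ} (A : Matrix (Fin n) (Fin n) ℝ) (hA : Aᵀ = A)
    (c x y : Fin n → ℝ) :
    (1/2) * (y ⬝ᵥ A.mulVec y) + c ⬝ᵥ y
      = ((1/2) * (x ⬝ᵥ A.mulVec x) + c ⬝ᵥ x) + (A.mulVec x + c) ⬝ᵥ (y - x)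
        + (1/2) * ((y - x) ⬝ᵥ A.mulVec (y - x)) := by
  have hsym : ∀ p q : Fin n → ℝ, p ⬝ᵥ A.mulVec q = q ⬝ᵥ A.mulVec p := by
    intro p q
    rw [Matrix.dotProduct_mulVec, ← Matrix.mulVec_transpose, hA, dotProduct_comm]
  simp only [Matrix.mulVec_sub, dotProduct_sub, sub_dotProduct,
    add_dotProduct, dotProduct_add]
  linarith [hsym x y, dotProduct_comm (A *ᵥ x) y, dotProduct_comm (A *ᵥ x) x]

lemma pgd_step {n : ℕ} (A : Matrix (Fin n) (Fin n) ℝ) (hA : Aᵀ = A)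
    (c : Fin n → ℝ) (σ η : ℝ) (hσn : ‖Matrix.toEuclideanCLM (𝕜 := ℝ) A‖ ≤ σ)
    (hη0 : 0 < η) (hησ : σ * η ≤ 2)
    (r : Fin n → ℝ) (hr : ∀ i, 0 ≤ r i)
    (r' : Fin n → ℝ) (hr' : r' = fun i => max (r i - η * ((A.mulVec r) i + c i)) 0) :
    (1/2) * (r' ⬝ᵥ A.mulVec r') + c ⬝ᵥ r' ≤ (1/2) * (r ⬝ᵥ A.mulVec r) + c ⬝ᵥ r := by
  set d : Fin n → ℝ := A.mulVec r + c with hd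
  set v : Fin n → ℝ := r' - r with hv
  have hηne : η ≠ 0 := ne_of_gt hη0
  have hcomp : ∀ i, d i * v i ≤ -(1/η) * (v i)^2 := by
    intro i
    have hdi : d i = (A.mulVec r) i + c i := rfl
    have hvi : v i = r' i - r i := rfl
    rcases le_or_gt 0 (r i - η * d i) with h | h
    · have hri : r' i = r i - η * d i := by
        rw [hr']; simp only [← hdi]; exact max_eq_left h
      rw [hvi, hri]
      apply le_of_eq
      field_simp
      ring
    · have hri : r' i = 0 := by
        rw [hr']; simp only [← hdi]; exact max_eq_right h.le
      rw [hvi, hri]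
      have h2 : r i * (r i - η * d i) ≤ 0 :=
        mul_nonpos_of_nonneg_of_nonpos (hr i) h.le
      have h3 : (1/η) * (r i * (r i - η * d i)) ≤ 0 :=
        mul_nonpos_of_nonneg_of_nonpos (by positivity) h2
      have hexp : (1/η) * (r i * (r i - η * d i)) = (1/η) * (r i)^2 - d i * r i := by
        field_simp
      nlinarith [h3, hexp]
  have hsum : d ⬝ᵥ v ≤ -(1/η) * (v ⬝ᵥ v) := by
    have h1 : d ⬝ᵥ v = ∑ i, d i * v i := rfl
    have h2 : -(1/η) * (v ⬝ᵥ v) = ∑ i, -(1/η) * (v i)^2 := by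
      rw [dotProduct, Finset.mul_sum]
      exact Finset.sum_congr rfl fun i _ => by ring
    rw [h1, h2]
    exact Finset.sum_le_sum fun i _ => hcomp i
  have hvv : 0 ≤ v ⬝ᵥ v := by
    rw [dotProduct]
    exact Finset.sum_nonneg fun i _ => mul_self_nonneg _
  have hquad : v ⬝ᵥ A.mulVec v ≤ σ * (v ⬝ᵥ v) := by
    calc v ⬝ᵥ A.mulVec v ≤ ‖Matrix.toEuclideanCLM (𝕜 := ℝ) A‖ * (v ⬝ᵥ v) := quad_bound A v
      _ ≤ σ * (v ⬝ᵥ v) := mul_le_mul_of_nonneg_right hσn hvv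
  have htaylor := quad_taylor A hA c r r'
  have hvr : r' - r = v := rfl
  rw [hvr] at htaylor
  have hfrac : σ / 2 ≤ 1 / η := by
    rw [div_le_div_iff₀ (by norm_num) hη0]
    linarith
  nlinarith [mul_le_mul_of_nonneg_right hfrac hvv]

end Aux

open Finset


set_option maxHeartbeats 1000000 in
/-- Descent guarantee (Prop. 4(descent part)): with z = x^k − α∇f(x^k), the
iterate S^m(|x^k|) ⊙ u satisfies C(S^m(|x^k|) ⊙ u) ≤ C(x^k) for every m ≥ 1. -/
theorem stmt12 (n : ℕ) (hn : 0 < n) (W : Matrix (Fin n) (Fin n) ℝ)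
    (hsymm : ∀ i j, W i j = W j i) (hnonneg : ∀ i j, 0 ≤ W i j)
    (hdiag : ∀ i, W i i = 0)
    (f : EuclideanSpace ℂ (Fin n) → ℝ)
    (gradf : EuclideanSpace ℂ (Fin n) → EuclideanSpace ℂ (Fin n))
    (hconv : ConvexOn ℝ Set.univ f)
    (hdiff : ∀ x, HasGradientAt f (gradf x) x)
    (L : ℝ) (hL : 0 < L)
    (hlip : ∀ x y, ‖gradf x - gradf y‖ ≤ L * ‖x - y‖)
    (lam : ℝ) (hlam : 0 < lam)
    (α : ℝ) (hα0 : 0 < α) (hα : α ≤ 1 / L)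
    (β : ℝ) (hβ : β = α * lam)
    (hpsd : ((1 : Matrix (Fin n) (Fin n) ℝ) + β • W).PosSemidef)
    (σ : ℝ) (hσpos : 0 < σ)
    (hσ : σ = ‖Matrix.toEuclideanCLM (𝕜 := ℝ) ((1 : Matrix (Fin n) (Fin n) ℝ) + β • W)‖)
    (η : ℝ) (hη0 : 0 < η) (hη : η ≤ 2 / σ)
    (xk : EuclideanSpace ℂ (Fin n))
    (z : EuclideanSpace ℂ (Fin n)) (hz : z = xk - α • gradf xk)
    (S : (Fin n → ℝ) → (Fin n → ℝ))
    (hS : S = fun x i => max (x i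
        - η * ((((1 : Matrix (Fin n) (Fin n) ℝ) + β • W).mulVec x) i
            + β - ‖z i‖)) 0)
    (u : Fin n → ℂ)
    (hu : ∀ i, u i = if z i ≠ 0 then z i / (‖z i‖ : ℂ) else 1)
    (C : EuclideanSpace ℂ (Fin n) → ℝ)
    (hC : C = fun x => f x + lam * ((∑ i, ‖x i‖)
        + (1 / 2) * ∑ i, ∑ j, W i j * (‖x i‖ * ‖x j‖))) :
    ∀ m : ℕ, 1 ≤ m →
      C (WithLp.toLp 2 (fun i => ((S^[m] (fun i => ‖xk i‖)) i : ℂ) * u i)) ≤ C xk := by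
  intro m _
  have hαne : α ≠ 0 := ne_of_gt hα0
  set g : EuclideanSpace ℂ (Fin n) := gradf xk with hg
  set b : Fin n → ℝ := fun i => ‖z i‖ with hb
  set A : Matrix (Fin n) (Fin n) ℝ := 1 + β • W with hA
  have hAsymm : Aᵀ = A := by
    rw [hA, Matrix.transpose_add, Matrix.transpose_one, Matrix.transpose_smul]
    congr 1
    ext i j
    exact congrArg _ (hsymm j i)
  set cvec : Fin n → ℝ := fun i => β - b i with hcvec
  set q : (Fin n → ℝ) → ℝ := fun r => (1/2) * (r ⬝ᵥ A.mulVec r) + cvec ⬝ᵥ r with hq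
  set r0 : Fin n → ℝ := fun i => ‖xk i‖ with hr0
  set K : ℝ := f xk - α/2 * ‖g‖^2 with hK
  -- facts about u and z
  have hu1 : ∀ i, ‖u i‖ = 1 := by
    intro i
    rw [hu i]
    split_ifs with hzi
    · rw [norm_div, Complex.norm_real, Real.norm_eq_abs, abs_of_nonneg (norm_nonneg _)]
      exact div_self (norm_ne_zero_iff.2 hzi)
    · simp
  have hzu : ∀ i, z i = (b i : ℂ) * u i := by
    intro i
    rw [hu i]
    split_ifs with hzi
    · rw [hb]
      simp only
      rw [mul_comm, div_mul_cancel₀]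
      exact Complex.ofReal_ne_zero.2 (norm_ne_zero_iff.2 hzi)
    · push_neg at hzi
      simp [hb, hzi]
  -- norms as sums
  have hnorm : ∀ w : EuclideanSpace ℂ (Fin n), ‖w‖^2 = ∑ i, ‖w i‖^2 := by
    intro w
    rw [EuclideanSpace.norm_eq, Real.sq_sqrt (by positivity)]
  -- double sum identity
  have hdouble : ∀ r : Fin n → ℝ,
      (∑ i, ∑ j, W i j * (r i * r j)) = r ⬝ᵥ W.mulVec r := by
    intro r
    rw [dotProduct]
    refine Finset.sum_congr rfl fun i _ => ?_
    rw [Matrix.mulVec, dotProduct, Finset.mul_sum]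
    exact Finset.sum_congr rfl fun j _ => by ring
  -- key algebraic identity
  have halg : ∀ r : Fin n → ℝ,
      1/(2*α) * (∑ i, (r i - b i)^2) + lam * ((∑ i, r i) + (1/2) * (r ⬝ᵥ W.mulVec r))
        = (1/α) * q r + 1/(2*α) * (b ⬝ᵥ b) := by
    intro r
    have e1 : A.mulVec r = r + β • W.mulVec r := by
      rw [hA, Matrix.add_mulVec, Matrix.one_mulVec, Matrix.smul_mulVec]
    have e2 : r ⬝ᵥ A.mulVec r = r ⬝ᵥ r + β * (r ⬝ᵥ W.mulVec r) := by
      rw [e1, dotProduct_add, dotProduct_smul, smul_eq_mul]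
    have e3 : cvec ⬝ᵥ r = β * (∑ i, r i) - b ⬝ᵥ r := by
      rw [dotProduct, dotProduct, Finset.mul_sum, ← Finset.sum_sub_distrib]
      exact Finset.sum_congr rfl fun i _ => by rw [hcvec]; ring
    have e4 : (∑ i, (r i - b i)^2) = r ⬝ᵥ r - 2 * (b ⬝ᵥ r) + b ⬝ᵥ b := by
      rw [dotProduct, dotProduct, dotProduct, Finset.mul_sum,
        ← Finset.sum_sub_distrib, ← Finset.sum_add_distrib]
      exact Finset.sum_congr rfl fun i _ => by ring
    rw [hq]
    simp only
    rw [e2, e3, e4, hβ]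
    field_simp
    ring
  -- key upper bound
  have hKey : ∀ r : Fin n → ℝ, (∀ i, 0 ≤ r i) →
      C (WithLp.toLp 2 (fun i => ((r i : ℝ) : ℂ) * u i)) ≤ K + (1/α) * q r + 1/(2*α) * (b ⬝ᵥ b) := by
    intro r hr
    set y : EuclideanSpace ℂ (Fin n) := WithLp.toLp 2 (fun i => ((r i : ℝ) : ℂ) * u i) with hy
    have habs : ∀ i, ‖y i‖ = r i := by
      intro i
      rw [hy]
      simp only [PiLp.toLp_apply]
      rw [norm_mul, hu1, Complex.norm_real, Real.norm_eq_abs, abs_of_nonneg (hr i), mul_one]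
    have h1 : f y ≤ f xk + (inner ℝ g (y - xk) : ℝ) + L/2 * ‖y - xk‖^2 :=
      descent_lem f gradf hdiff L hlip xk y
    have h2 : f y ≤ f xk + (inner ℝ g (y - xk) : ℝ) + 1/(2*α) * ‖y - xk‖^2 := by
      have hLα : L/2 ≤ 1/(2*α) := by
        rw [div_le_div_iff₀ (by norm_num) (by positivity)]
        have : α * L ≤ 1 := by
          rw [← le_div_iff₀ hL] at *
          exact hα
        nlinarith
      nlinarith [sq_nonneg ‖y - xk‖, mul_le_mul_of_nonneg_right hLα (sq_nonneg ‖y - xk‖)]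
    have h3 : (inner ℝ g (y - xk) : ℝ) + 1/(2*α) * ‖y - xk‖^2
        = 1/(2*α) * ‖y - z‖^2 - α/2 * ‖g‖^2 := by
      have hyz : y - z = (y - xk) + α • g := by rw [hz]; abel
      have hexp : ‖y - z‖^2 = ‖y - xk‖^2 + 2 * (inner ℝ (y - xk) (α • g) : ℝ) + ‖α • g‖^2 := by
        rw [hyz, norm_add_sq_real]
      have hin : (inner ℝ (y - xk) (α • g) : ℝ) = α * (inner ℝ g (y - xk) : ℝ) := by
        rw [real_inner_smul_right, real_inner_comm]
      have hng : ‖α • g‖^2 = α^2 * ‖g‖^2 := by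
        rw [norm_smul, Real.norm_eq_abs, abs_of_pos hα0, mul_pow]
      rw [hexp, hin, hng]
      field_simp
      ring
    have h4 : ‖y - z‖^2 = ∑ i, (r i - b i)^2 := by
      rw [hnorm]
      refine Finset.sum_congr rfl fun i _ => ?_
      have hyzi : (y - z) i = (((r i - b i : ℝ)) : ℂ) * u i := by
        have : (y - z) i = y i - z i := rfl
        rw [this, hy]
        simp only [PiLp.toLp_apply]
        rw [hzu i]
        push_cast
        ring
      rw [hyzi, norm_mul, hu1, mul_one, Complex.norm_real, Real.norm_eq_abs, sq_abs]
    have e5 : (∑ i, ‖y i‖) = ∑ i, r i :=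
      Finset.sum_congr rfl fun i _ => habs i
    have e6 : (∑ i, ∑ j, W i j * (‖y i‖ * ‖y j‖))
        = ∑ i, ∑ j, W i j * (r i * r j) :=
      Finset.sum_congr rfl fun i _ => Finset.sum_congr rfl fun j _ => by
        rw [habs i, habs j]
    have h5 : C y = f y + lam * ((∑ i, r i) + (1/2) * (r ⬝ᵥ W.mulVec r)) := by
      rw [hC]
      simp only
      rw [e5, e6, hdouble r]
    rw [h4] at h3
    rw [h5, hK]
    linarith [h2, h3, halg r]
  -- iterate invariant
  have hησ2 : σ * η ≤ 2 := by
    rw [mul_comm]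
    exact (le_div_iff₀ hσpos).1 hη
  have hSmatch : ∀ r : Fin n → ℝ,
      S r = fun i => max (r i - η * ((A.mulVec r) i + cvec i)) 0 := by
    intro r
    funext i
    rw [hS]
    simp only [hcvec, hA, hb]
    congr 2
    ring
  have hiter : ∀ k : ℕ, (∀ i, 0 ≤ (S^[k] r0) i) ∧ q (S^[k] r0) ≤ q r0 := by
    intro k
    induction k with
    | zero => exact ⟨fun i => norm_nonneg _, le_refl _⟩
    | succ k ih =>
      rw [Function.iterate_succ_apply']
      constructor
      · intro i
        rw [hS]
        exact le_max_right _ _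
      · have hstep := pgd_step A hAsymm cvec σ η (le_of_eq hσ.symm) hη0 hησ2
          (S^[k] r0) ih.1 (S (S^[k] r0)) (hSmatch _)
        exact le_trans hstep ih.2
  -- final comparison at r0
  have hCxk : C xk = f xk + lam * ((∑ i, r0 i) + (1/2) * (r0 ⬝ᵥ W.mulVec r0)) := by
    rw [← hdouble r0, hC]
  have hfinal : K + (1/α) * q r0 + 1/(2*α) * (b ⬝ᵥ b) ≤ C xk := by
    have h6 := halg r0
    have hsq : (∑ i, (‖xk i‖ - b i)^2) ≤ α^2 * ‖g‖^2 := by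
      have h1 : ‖xk - z‖^2 = α^2 * ‖g‖^2 := by
        have : xk - z = α • g := by rw [hz]; abel
        rw [this, norm_smul, Real.norm_eq_abs, abs_of_pos hα0, mul_pow]
      rw [← h1, hnorm]
      refine Finset.sum_le_sum fun i _ => ?_
      have hsub : (xk - z) i = xk i - z i := rfl
      rw [hsub]
      have habs := abs_norm_sub_norm_le (xk i) (z i)
      rw [hb]
      calc (‖xk i‖ - ‖z i‖)^2
          = |‖xk i‖ - ‖z i‖|^2 := (sq_abs _).symm
        _ ≤ ‖xk i - z i‖^2 := by
            apply pow_le_pow_left₀ (abs_nonneg _) habs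
    rw [hK, hCxk]
    have h7 : 1/(2*α) * (∑ i, (‖xk i‖ - b i)^2) ≤ α/2 * ‖g‖^2 := by
      have e7 : 1/(2*α) * (α^2 * ‖g‖^2) = α/2 * ‖g‖^2 := by
        field_simp
      have e8 := mul_le_mul_of_nonneg_left hsq (show (0:ℝ) ≤ 1/(2*α) by positivity)
      linarith
    have h8 : (∑ i, (r0 i - b i)^2) = ∑ i, (‖xk i‖ - b i)^2 := by rw [hr0]
    linarith
  -- assemble
  calc C (WithLp.toLp 2 (fun i => ((S^[m] r0) i : ℂ) * u i))
      ≤ K + (1/α) * q (S^[m] r0) + 1/(2*α) * (b ⬝ᵥ b) := hKey _ (hiter m).1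
    _ ≤ K + (1/α) * q r0 + 1/(2*α) * (b ⬝ᵥ b) := by
        have := (hiter m).2
        have h := mul_le_mul_of_nonneg_left this (le_of_lt (by positivity : (0:ℝ) < 1/α))
        linarith
    _ ≤ C xk := hfinal
end

section
/- Suppose λ > 0 satisfies λ · (max_i Σ_{j≠i} w_{ij}) < 1. Then for every z ∈ ℂⁿ, the threshold function T_{λ,W}(z) is well-defined: the function x ↦ D_{λ,W}(x; z) attains its minimum over ℂⁿ at a unique point. -/
open Finset

private lemma para_cx (u v : ℂ) :
    ‖(u + v) / 2‖ ^ 2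
      = (‖u‖ ^ 2 + ‖v‖ ^ 2) / 2 - ‖u - v‖ ^ 2 / 4 := by
  have h := parallelogram_law_with_norm ℝ u v
  have h2 : ‖(u + v) / 2‖ = ‖u + v‖ / 2 := by
    rw [norm_div]; norm_num
  rw [h2]
  nlinarith [norm_nonneg (u + v), norm_nonneg (u - v)]

private lemma assemble (lam S Sd A B Am Lm Lx Ly Qm Qx Qy : ℝ)
    (hlam : 0 < lam) (hSd0 : 0 ≤ Sd) (hlS : lam * S ≤ 1)
    (hP1 : Am = (A + B) / 2 - Sd / 4)
    (hP2 : Lm ≤ (Lx + Ly) / 2)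
    (hP3 : Qm ≤ Qx / 2 + Qy / 2 + S * Sd / 4) :
    (1/2) * Am + lam * (Lm + (1/2) * Qm)
      ≤ ((1/2) * A + lam * (Lx + (1/2) * Qx) + ((1/2) * B + lam * (Ly + (1/2) * Qy))) / 2
        - ((1 - lam * S) / 8) * Sd := by
  have h1 := mul_le_mul_of_nonneg_left hP2 hlam.le
  have h2 := mul_le_mul_of_nonneg_left hP3 hlam.le
  nlinarith [h1, h2]

private lemma aux1 (w ci cj : ℝ) (h : 0 ≤ w) :
    -(w * (ci * cj)) ≤ w * (ci ^ 2 + cj ^ 2) / 2 := by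
  nlinarith [mul_nonneg h (sq_nonneg (ci + cj))]

set_option maxHeartbeats 1000000 in
/-- If λ·(max_i Σ_{j≠i} w_{ij}) < 1, then for every z ∈ ℂⁿ the threshold
T_{λ,W}(z) is well-defined: D_{λ,W}(·;z) attains its minimum over ℂⁿ at a unique point. -/
theorem stmt14 (n : ℕ) (hn : 0 < n) (W : Matrix (Fin n) (Fin n) ℝ)
    (hsymm : ∀ i j, W i j = W j i) (hnonneg : ∀ i j, 0 ≤ W i j)
    (hdiag : ∀ i, W i i = 0) (lam : ℝ) (hlam : 0 < lam)
    (hbound : lam * (Finset.univ.sup'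
        (Finset.univ_nonempty_iff.mpr (Fin.pos_iff_nonempty.mp hn))
        (fun i => ∑ j ∈ Finset.univ.erase i, W i j)) < 1)
    (D : (Fin n → ℂ) → (Fin n → ℂ) → ℝ)
    (hD : D = fun x z => (1 / 2) * ∑ i, ‖z i - x i‖ ^ 2
        + lam * ((∑ i, ‖x i‖)
            + (1 / 2) * ∑ i, ∑ j, W i j * (‖x i‖ * ‖x j‖)))
    (z : Fin n → ℂ) :
    ∃! xhat : Fin n → ℂ, ∀ x : Fin n → ℂ, D xhat z ≤ D x z := by
  set S : ℝ := Finset.univ.sup'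
      (Finset.univ_nonempty_iff.mpr (Fin.pos_iff_nonempty.mp hn))
      (fun i => ∑ j ∈ Finset.univ.erase i, W i j) with hSdef
  have hi0 : (⟨0, hn⟩ : Fin n) = ⟨0, hn⟩ := rfl
  have hrow : ∀ i : Fin n, ∑ j, W i j ≤ S := by
    intro i
    have h1 : ∑ j, W i j = ∑ j ∈ Finset.univ.erase i, W i j := by
      rw [← Finset.add_sum_erase _ _ (mem_univ i), hdiag, zero_add]
    rw [h1]
    exact Finset.le_sup' (fun i => ∑ j ∈ Finset.univ.erase i, W i j) (mem_univ i)
  have hS0 : (0 : ℝ) ≤ S := by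
    refine le_trans ?_ (hrow ⟨0, hn⟩)
    exact Finset.sum_nonneg fun j _ => hnonneg _ _
  have hlS : lam * S < 1 := hbound
  clear_value S
  -- abbreviate the objective
  set F : (Fin n → ℂ) → ℝ := fun x =>
    (1 / 2) * ∑ i, ‖z i - x i‖ ^ 2
      + lam * ((∑ i, ‖x i‖)
          + (1 / 2) * ∑ i, ∑ j, W i j * (‖x i‖ * ‖x j‖)) with hF
  have hDF : ∀ x, D x z = F x := by intro x; rw [hD]
  -- nonnegativity of the penalty part
  have hpen : ∀ x : Fin n → ℂ, 0 ≤ (∑ i, ‖x i‖)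
      + (1 / 2) * ∑ i, ∑ j, W i j * (‖x i‖ * ‖x j‖) := by
    intro x
    have h1 : (0:ℝ) ≤ ∑ i, ‖x i‖ :=
      Finset.sum_nonneg fun i _ => (norm_nonneg _)
    have h2 : (0:ℝ) ≤ ∑ i, ∑ j, W i j * (‖x i‖ * ‖x j‖) :=
      Finset.sum_nonneg fun i _ => Finset.sum_nonneg fun j _ =>
        mul_nonneg (hnonneg i j) (mul_nonneg (norm_nonneg _) (norm_nonneg _))
    linarith
  have hFlb : ∀ x : Fin n → ℂ, (1 / 2) * ∑ i, ‖z i - x i‖ ^ 2 ≤ F x := by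
    intro x
    have := hpen x
    rw [hF]
    nlinarith
  clear_value F
  -- KEY midpoint inequality
  have key : ∀ x y : Fin n → ℂ,
      F (fun i => (x i + y i) / 2)
        ≤ (F x + F y) / 2
          - ((1 - lam * S) / 8) * ∑ i, ‖x i - y i‖ ^ 2 := by
    intro x y
    set a : Fin n → ℝ := fun i => ‖x i‖ with ha
    set b : Fin n → ℝ := fun i => ‖y i‖ with hb
    set c : Fin n → ℝ := fun i => a i - b i with hc
    set Sd : ℝ := ∑ i, ‖x i - y i‖ ^ 2 with hSd
    have hSd0 : 0 ≤ Sd := Finset.sum_nonneg fun i _ => sq_nonneg _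
    -- P1: quadratic fidelity term
    have P1 : ∑ i, ‖z i - (x i + y i) / 2‖ ^ 2
        = (∑ i, ‖z i - x i‖ ^ 2 + ∑ i, ‖z i - y i‖ ^ 2) / 2
          - Sd / 4 := by
      have e : ∀ i : Fin n, ‖z i - (x i + y i) / 2‖ ^ 2
          = ((‖z i - x i‖ ^ 2 + ‖z i - y i‖ ^ 2) / 2
              - ‖x i - y i‖ ^ 2 / 4) := by
        intro i
        have e1 : z i - (x i + y i) / 2 = ((z i - x i) + (z i - y i)) / 2 := by ring
        have e2 : (z i - x i) - (z i - y i) = -(x i - y i) := by ring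
        rw [e1, para_cx, e2]
        rw [norm_neg]
      calc ∑ i, ‖z i - (x i + y i) / 2‖ ^ 2
          = ∑ i, ((‖z i - x i‖ ^ 2 + ‖z i - y i‖ ^ 2) / 2
              - ‖x i - y i‖ ^ 2 / 4) := Finset.sum_congr rfl fun i _ => e i
        _ = _ := by
            rw [hSd, Finset.sum_sub_distrib, ← Finset.sum_div, ← Finset.sum_div,
              Finset.sum_add_distrib]
    -- P2: l1 term
    have P2 : ∑ i, ‖(x i + y i) / 2‖ ≤ (∑ i, a i + ∑ i, b i) / 2 := by
      rw [← Finset.sum_add_distrib, Finset.sum_div]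
      refine Finset.sum_le_sum fun i _ => ?_
      have := norm_add_le (x i) (y i)
      rw [norm_div]
      simp only [Complex.norm_two]
      rw [div_le_div_iff₀ (by norm_num) (by norm_num)]
      nlinarith
    -- P3: quadratic penalty term
    have habs2 : ∀ i, ‖(x i + y i) / 2‖ ≤ (a i + b i) / 2 := by
      intro i
      have := norm_add_le (x i) (y i)
      rw [norm_div, Complex.norm_two]
      linarith
    have habsnn : ∀ i, (0:ℝ) ≤ ‖(x i + y i) / 2‖ := fun i => norm_nonneg _
    have P3a : ∑ i, ∑ j, W i j * (‖(x i + y i)/2‖ * ‖(x j + y j)/2‖)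
        ≤ ∑ i, ∑ j, W i j * (((a i + b i)/2) * ((a j + b j)/2)) := by
      refine Finset.sum_le_sum fun i _ => Finset.sum_le_sum fun j _ => ?_
      refine mul_le_mul_of_nonneg_left ?_ (hnonneg i j)
      exact mul_le_mul (habs2 i) (habs2 j) (habsnn j) (by positivity)
    have P3b : ∑ i, ∑ j, W i j * (((a i + b i)/2) * ((a j + b j)/2))
        = (∑ i, ∑ j, W i j * (a i * a j)) / 2 + (∑ i, ∑ j, W i j * (b i * b j)) / 2
          - (∑ i, ∑ j, W i j * (c i * c j)) / 4 := by
      simp only [Finset.sum_div, ← Finset.sum_add_distrib, ← Finset.sum_sub_distrib]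
      refine Finset.sum_congr rfl fun i _ => Finset.sum_congr rfl fun j _ => ?_
      simp only [hc]
      ring
    have P3c : -(∑ i, ∑ j, W i j * (c i * c j)) ≤ S * Sd := by
      have step1 : -(∑ i, ∑ j, W i j * (c i * c j))
          ≤ ∑ i, ∑ j, W i j * ((c i)^2 + (c j)^2) / 2 := by
        rw [← Finset.sum_neg_distrib]
        refine Finset.sum_le_sum fun i _ => ?_
        rw [← Finset.sum_neg_distrib]
        refine Finset.sum_le_sum fun j _ => ?_
        exact aux1 _ _ _ (hnonneg i j)
      have step2 : ∑ i, ∑ j, W i j * ((c i)^2 + (c j)^2) / 2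
          = ∑ i, (∑ j, W i j) * (c i)^2 := by
        have e : ∀ i j : Fin n, W i j * ((c i)^2 + (c j)^2) / 2
            = W i j * (c i)^2 / 2 + W i j * (c j)^2 / 2 := fun i j => by ring
        simp only [e, Finset.sum_add_distrib]
        have e2 : ∑ i, ∑ j, W i j * (c j)^2 / 2 = ∑ i, ∑ j, W i j * (c i)^2 / 2 := by
          rw [Finset.sum_comm]
          refine Finset.sum_congr rfl fun i _ => Finset.sum_congr rfl fun j _ => by
            rw [hsymm]
        rw [e2, ← Finset.sum_add_distrib]
        refine Finset.sum_congr rfl fun i _ => ?_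
        rw [Finset.sum_mul, ← Finset.sum_add_distrib]
        refine Finset.sum_congr rfl fun j _ => by ring
      have step3 : ∑ i, (∑ j, W i j) * (c i)^2 ≤ S * Sd := by
        rw [hSd, Finset.mul_sum]
        refine Finset.sum_le_sum fun i _ => ?_
        have hci : (c i)^2 ≤ ‖x i - y i‖ ^ 2 := by
          have h1 : |c i| ≤ ‖x i - y i‖ :=
            abs_norm_sub_norm_le (x i) (y i)
          have h2 : (c i)^2 = |c i|^2 := (sq_abs _).symm
          rw [h2]
          exact pow_le_pow_left₀ (abs_nonneg _) h1 2
        have hrnn : 0 ≤ ∑ j, W i j := Finset.sum_nonneg fun j _ => hnonneg i j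
        calc (∑ j, W i j) * (c i)^2 ≤ (∑ j, W i j) * ‖x i - y i‖ ^ 2 :=
              mul_le_mul_of_nonneg_left hci hrnn
          _ ≤ S * ‖x i - y i‖ ^ 2 :=
              mul_le_mul_of_nonneg_right (hrow i) (sq_nonneg _)
      linarith
    -- assemble
    have P3 : ∑ i, ∑ j, W i j * (‖(x i + y i)/2‖ * ‖(x j + y j)/2‖)
        ≤ (∑ i, ∑ j, W i j * (a i * a j)) / 2 + (∑ i, ∑ j, W i j * (b i * b j)) / 2
          + S * Sd / 4 := by
      calc _ ≤ _ := P3a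
        _ = _ := P3b
        _ ≤ _ := by linarith
    simp only [ha, hb] at P2 P3
    have main := assemble lam S Sd
      (∑ i, ‖z i - x i‖ ^ 2) (∑ i, ‖z i - y i‖ ^ 2)
      (∑ i, ‖z i - (x i + y i) / 2‖ ^ 2)
      (∑ i, ‖(x i + y i) / 2‖)
      (∑ i, ‖x i‖) (∑ i, ‖y i‖)
      (∑ i, ∑ j, W i j * (‖(x i + y i)/2‖ * ‖(x j + y j)/2‖))
      (∑ i, ∑ j, W i j * (‖x i‖ * ‖x j‖))
      (∑ i, ∑ j, W i j * (‖y i‖ * ‖y j‖))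
      hlam hSd0 hlS.le P1 P2 ?_
    · simp only [hF]
      exact main
    · linarith [P3]
  -- EXISTENCE
  have hcont : Continuous F := by
    rw [hF]
    refine Continuous.add (Continuous.mul continuous_const ?_)
        (Continuous.mul continuous_const (Continuous.add ?_
          (Continuous.mul continuous_const ?_)))
    · exact continuous_finset_sum _ fun i _ =>
        ((continuous_norm.comp ((continuous_const.sub (continuous_apply i)))).pow 2)
    · exact continuous_finset_sum _ fun i _ =>
        continuous_norm.comp (continuous_apply i)
    · exact continuous_finset_sum _ fun i _ => continuous_finset_sum _ fun j _ =>
        Continuous.mul continuous_const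
          (Continuous.mul (continuous_norm.comp (continuous_apply i))
            (continuous_norm.comp (continuous_apply j)))
  have hFz0 : 0 ≤ F z := by
    refine le_trans ?_ (hFlb z)
    positivity
  have hcoer : ∀ᶠ x in Filter.cocompact (Fin n → ℂ), F z ≤ F x := by
    have hR : Filter.Tendsto (fun x : Fin n → ℂ => ‖x‖) (Filter.cocompact _) Filter.atTop :=
      tendsto_norm_cocompact_atTop
    filter_upwards [hR.eventually_ge_atTop (‖z‖ + Real.sqrt (2 * F z))] with x hx
    have hTnn : 0 ≤ ∑ i, ‖z i - x i‖ ^ 2 :=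
      Finset.sum_nonneg fun i _ => sq_nonneg _
    have hnorm : ‖x - z‖ ^ 2 ≤ ∑ i, ‖z i - x i‖ ^ 2 := by
      have hle : ‖x - z‖ ≤ Real.sqrt (∑ i, ‖z i - x i‖ ^ 2) := by
        rw [pi_norm_le_iff_of_nonneg (Real.sqrt_nonneg _)]
        intro i
        have h1 : ‖(x - z) i‖ = ‖z i - x i‖ := by
          simp [norm_sub_rev]
        rw [h1]
        rw [show ‖z i - x i‖ = Real.sqrt (‖z i - x i‖ ^ 2) by
          rw [Real.sqrt_sq (norm_nonneg _)]]
        exact Real.sqrt_le_sqrt (Finset.single_le_sum (f := fun j => ‖z j - x j‖ ^ 2) (fun j _ => sq_nonneg _) (mem_univ i))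
      nlinarith [hle, norm_nonneg (x - z), Real.sq_sqrt hTnn, Real.sqrt_nonneg
        (∑ i, ‖z i - x i‖ ^ 2)]
    have hxz : Real.sqrt (2 * F z) ≤ ‖x - z‖ := by
      linarith [norm_sub_norm_le x z, hx]
    have h2Fz : 2 * F z ≤ ‖x - z‖ ^ 2 := by
      nlinarith [Real.sq_sqrt (show (0:ℝ) ≤ 2 * F z by linarith),
        Real.sqrt_nonneg (2 * F z), hxz]
    have := hFlb x
    linarith
  obtain ⟨xhat, hxhat⟩ := hcont.exists_forall_le' z hcoer
  refine ⟨xhat, fun x => by rw [hDF, hDF]; exact hxhat x, ?_⟩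
  -- UNIQUENESS
  intro y hy
  simp only [hDF] at hy
  have hkey := key y xhat
  have h1 : F xhat ≤ F (fun i => (y i + xhat i) / 2) := hxhat _
  have h2 : F y ≤ F xhat := hy xhat
  have h3 : F xhat ≤ F y := hxhat y
  have hSdnn : 0 ≤ ∑ i, ‖y i - xhat i‖ ^ 2 :=
    Finset.sum_nonneg fun i _ => sq_nonneg _
  have heps : 0 < (1 - lam * S) / 8 := by linarith
  have hSdle : ∑ i, ‖y i - xhat i‖ ^ 2 ≤ 0 := by
    by_contra hpos
    push_neg at hpos
    nlinarith [mul_pos heps hpos]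
  have hSdz : ∑ i, ‖y i - xhat i‖ ^ 2 = 0 := le_antisymm hSdle hSdnn
  funext i
  have h4 := (Finset.sum_eq_zero_iff_of_nonneg
      (fun i (_ : i ∈ univ) => sq_nonneg (‖y i - xhat i‖))).mp hSdz i (mem_univ i)
  have h5 : ‖y i - xhat i‖ = 0 := by
    nlinarith [norm_nonneg (y i - xhat i)]
  exact sub_eq_zero.mp (norm_eq_zero.mp h5)
end
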